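/- arXiv:1208.4445 — 8 statements merged into one kernel-verified Lean document; each statement's English description precedes it below -/
import Mathlib

section
/- Let n ≥ 3, 0 < m ≤ (n-2)/n, η > 0, α < 0 and β ≤ 0. Then there is no positive C² function v on [0,∞) satisfying ((n-1)/m)((v^m)'' + ((n-1)/r)(v^m)') + αv + βrv' = 0 on (0,∞) with v(0) = η and v'(0) = 0. -/
open Real Set Filter Topology

private lemma deriv_le_aux {f F : ℝ → ℝ} {a b : ℝ} (hab : a ≤ b)
    (hf : ∀ r ∈ Set.Icc a b, HasDerivAt f (F r) r)
    (hF : ∀ r ∈ Set.Ioo a b, 0 ≤ F r) : f a ≤ f b := by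
  rcases eq_or_lt_of_le hab with rfl | hab'
  · exact le_refl _
  have hmono : MonotoneOn f (Set.Icc a b) := by
    apply monotoneOn_of_deriv_nonneg (convex_Icc a b)
    · exact fun r hr => (hf r hr).continuousAt.continuousWithinAt
    · intro r hr
      rw [interior_Icc] at hr
      exact (hf r (Set.mem_Icc_of_Ioo hr)).differentiableAt.differentiableWithinAt
    · intro r hr
      rw [interior_Icc] at hr
      rw [(hf r (Set.mem_Icc_of_Ioo hr)).deriv]
      exact hF r hr
  exact hmono (Set.left_mem_Icc.2 hab) (Set.right_mem_Icc.2 hab) hab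

private lemma deriv_lt_aux {f F : ℝ → ℝ} {a b : ℝ} (hab : a < b)
    (hf : ∀ r ∈ Set.Icc a b, HasDerivAt f (F r) r)
    (hF : ∀ r ∈ Set.Ioo a b, 0 < F r) : f a < f b := by
  have hmono : StrictMonoOn f (Set.Icc a b) := by
    apply strictMonoOn_of_deriv_pos (convex_Icc a b)
    · exact fun r hr => (hf r hr).continuousAt.continuousWithinAt
    · intro r hr
      rw [interior_Icc] at hr
      rw [(hf r (Set.mem_Icc_of_Ioo hr)).deriv]
      exact hF r hr
  exact hmono (Set.left_mem_Icc.2 hab.le) (Set.right_mem_Icc.2 hab.le) hab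

set_option maxHeartbeats 2000000 in
/-- Non-existence of positive radially symmetric solutions when α < 0 and β ≤ 0. -/
theorem stmt_0 (n : ℕ) (m α β η : ℝ) (hn : 3 ≤ n)
    (hm0 : 0 < m) (hm1 : m ≤ ((n : ℝ) - 2) / n)
    (hη : 0 < η) (hα : α < 0) (hβ : β ≤ 0) :
    ¬ ∃ v : ℝ → ℝ,
      (∀ r, 0 ≤ r → 0 < v r) ∧
      ContDiffOn ℝ 2 v (Set.Ici 0) ∧
      v 0 = η ∧ deriv v 0 = 0 ∧
      (∀ r, 0 < r →
        ((n : ℝ) - 1) / m *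
            (deriv (deriv (fun s => v s ^ m)) r
              + ((n : ℝ) - 1) / r * deriv (fun s => v s ^ m) r)
          + α * v r + β * r * deriv v r = 0) := by
  rintro ⟨v, hpos, hC2, hv0, -, hode⟩
  obtain ⟨k, rfl⟩ : ∃ k, n = k + 3 := ⟨n - 3, by omega⟩
  clear hn
  have hk0 : (0:ℝ) ≤ (k:ℝ) := Nat.cast_nonneg k
  have hm' : m ≠ 0 := ne_of_gt hm0
  have hm1' : m < 1 := by
    have h := hm1
    push_cast at h
    rw [le_div_iff₀ (by positivity)] at h
    nlinarith
  set q : ℝ := 1/m with hq_def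
  have hq1 : 1 < q := by rw [hq_def, lt_div_iff₀ hm0, one_mul]; exact hm1'
  have hmq : m * q = 1 := by rw [hq_def]; field_simp
  set p : ℝ := (q+1)/2 with hp_def
  have hp1 : 1 < p := by rw [hp_def]; linarith
  -- basic facts about v
  have hu_pos : ∀ r : ℝ, 0 ≤ r → 0 < v r ^ m := fun r hr => Real.rpow_pos_of_pos (hpos r hr) m
  have huq : ∀ r : ℝ, 0 ≤ r → (v r ^ m) ^ q = v r := by
    intro r hr
    rw [← Real.rpow_mul (hpos r hr).le, hmq, Real.rpow_one]
  -- derivative infrastructure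
  set g : ℝ → ℝ := derivWithin v (Set.Ici 0) with hg_def
  have hg1 : ContDiffOn ℝ 1 g (Set.Ici 0) := hC2.derivWithin (uniqueDiffOn_Ici 0) (by norm_num)
  have hgC : ContinuousOn g (Set.Ici 0) := hg1.continuousOn
  have hgV : ∀ r : ℝ, 0 < r → g r = deriv v r := fun r hr =>
    derivWithin_of_mem_nhds (Ici_mem_nhds hr)
  have hvd : ∀ r : ℝ, 0 < r → HasDerivAt v (deriv v r) r := by
    intro r hr
    exact (((hC2.differentiableOn (by norm_num)) r (le_of_lt hr)).differentiableAt
      (Ici_mem_nhds hr)).hasDerivAt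
  have hVd : ∀ r : ℝ, 0 < r → DifferentiableAt ℝ (deriv v) r := by
    intro r hr
    have h1 : DifferentiableAt ℝ g r :=
      ((hg1.differentiableOn (by norm_num)) r (le_of_lt hr)).differentiableAt (Ici_mem_nhds hr)
    exact h1.congr_of_eventuallyEq
      (eventually_of_mem (Ioi_mem_nhds hr) (fun x hx => (hgV x hx).symm))
  have hud : ∀ r : ℝ, 0 < r →
      HasDerivAt (fun s => v s ^ m) (deriv v r * m * v r ^ (m-1)) r := by
    intro r hr
    exact (hvd r hr).rpow_const (Or.inl (hpos r hr.le).ne')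
  set du : ℝ → ℝ := deriv (fun s => v s ^ m) with hdu_def
  set ddu : ℝ → ℝ := deriv du with hddu_def
  have hduf : ∀ r : ℝ, 0 < r → du r = deriv v r * m * v r ^ (m-1) := fun r hr =>
    (hud r hr).deriv
  have hud2 : ∀ r : ℝ, 0 < r → HasDerivAt (fun s => v s ^ m) (du r) r := fun r hr =>
    (hud r hr).differentiableAt.hasDerivAt
  have hdud : ∀ r : ℝ, 0 < r → HasDerivAt du (ddu r) r := by
    intro r hr
    have h1 : DifferentiableAt ℝ (fun s => deriv v s * m * v s ^ (m-1)) r := by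
      apply DifferentiableAt.mul
      · exact (hVd r hr).mul_const m
      · exact ((hvd r hr).differentiableAt).rpow_const (Or.inl (hpos r hr.le).ne')
    have h2 : DifferentiableAt ℝ du r :=
      h1.congr_of_eventuallyEq (eventually_of_mem (Ioi_mem_nhds hr) (fun x hx => hduf x hx))
    exact h2.hasDerivAt
  -- w and its derivative
  set w : ℝ → ℝ := fun r => r^(k+2) * du r with hw_def
  set W : ℝ → ℝ := fun r => m/((k:ℝ)+2) * r^(k+2) * (-(α * v r) - β * (r * deriv v r)) with hW_def
  have hwd : ∀ r : ℝ, 0 < r → HasDerivAt w (W r) r := by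
    intro r hr
    have h3 := (hasDerivAt_pow (k+2) r).mul (hdud r hr)
    have heq := hode r hr
    have hval : (↑(k+2) * r ^ (k+2-1) * du r + r^(k+2) * ddu r) = W r := by
      push_cast at heq ⊢
      simp only [Nat.add_sub_cancel, hW_def]
      have hr' : r ≠ 0 := ne_of_gt hr
      have hk2' : ((k:ℝ)+2) ≠ 0 := by positivity
      field_simp at heq ⊢
      linear_combination (r^(k+1)) * heq
    rw [← hval]
    exact h3
  -- limits at 0+
  have hvtend : Filter.Tendsto v (nhdsWithin (0:ℝ) (Set.Ioi 0)) (nhds η) := by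
    have h : ContinuousWithinAt v (Set.Ici 0) 0 := hC2.continuousOn 0 Set.self_mem_Ici
    rw [ContinuousWithinAt, hv0] at h
    exact h.mono_left (nhdsWithin_mono 0 Set.Ioi_subset_Ici_self)
  have hgtend : Filter.Tendsto g (nhdsWithin (0:ℝ) (Set.Ioi 0)) (nhds (g 0)) := by
    have h : ContinuousWithinAt g (Set.Ici 0) 0 := hgC 0 Set.self_mem_Ici
    exact h.mono_left (nhdsWithin_mono 0 Set.Ioi_subset_Ici_self)
  have hidtend : Filter.Tendsto (fun r : ℝ => r) (nhdsWithin (0:ℝ) (Set.Ioi 0)) (nhds 0) :=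
    tendsto_id.mono_left nhdsWithin_le_nhds
  have hwtend : Filter.Tendsto w (nhdsWithin (0:ℝ) (Set.Ioi 0)) (nhds 0) := by
    have hEq : ∀ r ∈ Set.Ioi (0:ℝ), r^(k+2) * (g r * m * v r ^ (m-1)) = w r := by
      intro r hr
      have : w r = r^(k+2) * du r := rfl
      rw [this, hduf r hr, hgV r hr]
    have h1 : Filter.Tendsto (fun r : ℝ => r^(k+2) * (g r * m * v r ^ (m-1)))
        (nhdsWithin (0:ℝ) (Set.Ioi 0)) (nhds ((0:ℝ)^(k+2) * (g 0 * m * η ^ (m-1)))) := by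
      apply Filter.Tendsto.mul
      · exact ((continuous_pow (k+2)).tendsto 0).mono_left nhdsWithin_le_nhds
      · exact (hgtend.mul_const m).mul
          (((Real.continuousAt_rpow_const η (m-1) (Or.inl hη.ne')).tendsto).comp hvtend)
    rw [zero_pow (by omega), zero_mul] at h1
    exact Filter.Tendsto.congr' (eventually_of_mem self_mem_nhdsWithin hEq) h1
  -- a small interval where W > 0
  have hαη : (0:ℝ) < -(α * η) - β * (0 * g 0) := by nlinarith
  have hWtend : Filter.Tendsto (fun r : ℝ => -(α * v r) - β * (r * g r))
      (nhdsWithin (0:ℝ) (Set.Ioi 0)) (nhds (-(α * η) - β * (0 * g 0))) := by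
    apply Filter.Tendsto.sub
    · exact (hvtend.const_mul α).neg
    · exact (hidtend.mul hgtend).const_mul β
  have hev : ∀ᶠ r in nhdsWithin (0:ℝ) (Set.Ioi 0), 0 < -(α * v r) - β * (r * g r) :=
    hWtend.eventually (eventually_gt_nhds hαη)
  obtain ⟨s, hs, hsub⟩ := hev.exists_mem
  obtain ⟨δ', hδ'mem, hδsub⟩ := mem_nhdsGT_iff_exists_Ioc_subset.mp hs
  have hδpos : (0:ℝ) < δ' := hδ'mem
  have hWpos_near : ∀ r ∈ Set.Ioc (0:ℝ) δ', 0 < W r := by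
    intro r hr
    have h1 : 0 < -(α * v r) - β * (r * g r) := hsub _ (hδsub hr)
    rw [hgV r hr.1] at h1
    have h2 : 0 < r ^ (k+2) := pow_pos hr.1 _
    have hmk : 0 < m / ((k:ℝ)+2) := by positivity
    have hWr : W r = m/((k:ℝ)+2) * r^(k+2) * (-(α * v r) - β * (r * deriv v r)) := rfl
    rw [hWr]
    exact mul_pos (mul_pos hmk h2) h1
  have hwnn : ∀ r ∈ Set.Ioc (0:ℝ) δ', 0 ≤ w r := by
    intro r hr
    refine le_of_tendsto hwtend ?_
    have hmem : Set.Ioo (0:ℝ) r ∈ nhdsWithin (0:ℝ) (Set.Ioi 0) :=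
      Ioo_mem_nhdsGT_of_mem ⟨le_refl 0, hr.1⟩
    refine eventually_of_mem hmem (fun s' hs' => ?_)
    refine le_of_lt (deriv_lt_aux hs'.2 (fun x hx => hwd x (lt_of_lt_of_le hs'.1 hx.1)) ?_)
    intro x hx
    exact hWpos_near x ⟨lt_trans hs'.1 hx.1, le_trans hx.2.le hr.2⟩
  have hwpos_near : ∀ r ∈ Set.Ioc (0:ℝ) δ', 0 < w r := by
    intro r hr
    have h1 : w (r/2) < w r := by
      apply deriv_lt_aux (by linarith [hr.1]) (fun x hx => hwd x (by linarith [hx.1, hr.1]))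
      intro x hx
      exact hWpos_near x ⟨by linarith [hr.1, hx.1], le_trans hx.2.le hr.2⟩
    have h2 : 0 ≤ w (r/2) := hwnn (r/2) ⟨by linarith [hr.1], by linarith [hr.1, hr.2]⟩
    linarith
  -- sign propagation
  have hdu_of_w : ∀ r : ℝ, 0 < r → 0 < w r → 0 < du r := by
    intro r hr hw
    by_contra hle
    push_neg at hle
    have hwr : w r = r^(k+2) * du r := rfl
    nlinarith [pow_pos hr (k+2)]
  have hV_of_w : ∀ r : ℝ, 0 < r → 0 < w r → 0 < deriv v r := by
    intro r hr hw
    have h1 := hdu_of_w r hr hw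
    rw [hduf r hr] at h1
    by_contra hle
    push_neg at hle
    have hp' := Real.rpow_pos_of_pos (hpos r hr.le) (m-1)
    nlinarith [mul_nonneg (neg_nonneg.mpr hle) (mul_pos hm0 hp').le]
  have hW_of_w : ∀ r : ℝ, 0 < r → 0 < w r → 0 < W r := by
    intro r hr hw
    have hV := hV_of_w r hr hw
    have hWr : W r = m/((k:ℝ)+2) * r^(k+2) * (-(α * v r) - β * (r * deriv v r)) := rfl
    have h2 : 0 < r ^ (k+2) := pow_pos hr _
    have hmk : 0 < m / ((k:ℝ)+2) := by positivity
    have h3 : 0 < -(α * v r) - β * (r * deriv v r) := by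
      nlinarith [hpos r hr.le, mul_nonneg (neg_nonneg.mpr hβ) (mul_nonneg hr.le hV.le)]
    rw [hWr]
    exact mul_pos (mul_pos hmk h2) h3
  -- global positivity of w
  have hwglob : ∀ r : ℝ, 0 < r → 0 < w r := by
    by_contra hcon
    push_neg at hcon
    obtain ⟨r0, hr0, hwr0⟩ := hcon
    set S : Set ℝ := {r : ℝ | 0 < r ∧ w r ≤ 0} with hS_def
    have hSne : S.Nonempty := ⟨r0, hr0, hwr0⟩
    have hSδ : ∀ s' ∈ S, δ' ≤ s' := by
      intro s' hs'
      by_contra hlt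
      push_neg at hlt
      exact absurd hs'.2 (not_le.mpr (hwpos_near s' ⟨hs'.1, hlt.le⟩))
    have hbdd : BddBelow S := ⟨δ', hSδ⟩
    have hρδ : δ' ≤ sInf S := le_csInf hSne hSδ
    have hρ0 : 0 < sInf S := lt_of_lt_of_le hδpos hρδ
    have hwρ : w (sInf S) ≤ 0 := by
      by_contra hlt
      push_neg at hlt
      have hpre : w ⁻¹' (Set.Ioi 0) ∈ nhds (sInf S) := (hwd _ hρ0).continuousAt (lt_mem_nhds hlt)
      obtain ⟨ε, hε, hball⟩ := Metric.mem_nhds_iff.mp hpre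
      obtain ⟨s', hsS, hsρ⟩ := exists_lt_of_csInf_lt hSne (show sInf S < sInf S + ε by linarith)
      have hρs : sInf S ≤ s' := csInf_le hbdd hsS
      have hmem : s' ∈ Metric.ball (sInf S) ε := by
        rw [Metric.mem_ball, Real.dist_eq, abs_lt]
        constructor <;> linarith
      exact absurd hsS.2 (not_le.mpr (hball hmem))
    have hwmid : w (δ'/2) < w (sInf S) := by
      apply deriv_lt_aux (by linarith) (fun x hx => hwd x (by linarith [hx.1]))
      intro x hx
      have hx0 : 0 < x := by linarith [hx.1]
      have hxw : 0 < w x := by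
        rcases le_or_gt x δ' with h | h
        · exact hwpos_near x ⟨hx0, h⟩
        · have hns : x ∉ S := notMem_of_lt_csInf hx.2 hbdd
          rw [hS_def] at hns
          simp only [Set.mem_setOf_eq, not_and, not_le] at hns
          exact hns hx0
      exact hW_of_w x hx0 hxw
    have := hwpos_near (δ'/2) ⟨by linarith, by linarith⟩
    linarith
  have hV_pos : ∀ r : ℝ, 0 < r → 0 < deriv v r := fun r hr => hV_of_w r hr (hwglob r hr)
  -- v is monotone
  have hvmono : MonotoneOn v (Set.Ici (0:ℝ)) := by
    apply monotoneOn_of_deriv_nonneg (convex_Ici 0) hC2.continuousOn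
    · intro x hx
      rw [interior_Ici] at hx
      exact ((hvd x hx).differentiableAt).differentiableWithinAt
    · intro x hx
      rw [interior_Ici] at hx
      exact (hV_pos x hx).le
  have hv_ge : ∀ r : ℝ, 0 ≤ r → η ≤ v r := by
    intro r hr
    have := hvmono Set.self_mem_Ici hr hr
    rwa [hv0] at this
  have hdu_pos : ∀ r : ℝ, 0 < r → 0 < du r := fun r hr => hdu_of_w r hr (hwglob r hr)
  -- the constant c and lower bound on W
  set c : ℝ := m * (-α) / ((k:ℝ)+2) with hc_def
  have hc0 : 0 < c := div_pos (mul_pos hm0 (neg_pos.mpr hα)) (by positivity)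
  have hk3 : (0:ℝ) < (k:ℝ) + 3 := by positivity
  have hW_lb : ∀ x : ℝ, 0 < x → c * x^(k+2) * v x ≤ W x := by
    intro x hx
    have hWx : W x = m/((k:ℝ)+2) * x^(k+2) * (-(α * v x) - β * (x * deriv v x)) := rfl
    have h2 : (0:ℝ) < x^(k+2) := pow_pos hx _
    have h1 : 0 ≤ m/((k:ℝ)+2) * x^(k+2) * (-(β * (x * deriv v x))) := by
      apply mul_nonneg (mul_nonneg (by positivity) h2.le)
      have := mul_nonneg (mul_nonneg hx.le (hV_pos x hx).le) (neg_nonneg.mpr hβ)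
      nlinarith
    have key : m/((k:ℝ)+2) * x^(k+2) * (-(α * v x) - β * (x * deriv v x))
        - m * (-α) / ((k:ℝ)+2) * x^(k+2) * v x
        = m/((k:ℝ)+2) * x^(k+2) * (-(β * (x * deriv v x))) := by ring
    rw [hWx, hc_def]
    linarith
  -- Step B': integrated lower bound for w
  have hstepB : ∀ R : ℝ, 0 < R → ∀ r : ℝ, R ≤ r →
      c * v R * (r^(k+3) - R^(k+3)) ≤ ((k:ℝ)+3) * w r := by
    intro R hR r hr
    have hle : ((k:ℝ)+3) * w R - c * v R * R^(k+3) ≤ ((k:ℝ)+3) * w r - c * v R * r^(k+3) := by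
      apply deriv_le_aux (f := fun x => ((k:ℝ)+3) * w x - c * v R * x^(k+3))
        (F := fun x => ((k:ℝ)+3) * W x - c * v R * (((k:ℝ)+3) * x^(k+2))) hr
      · intro x hx
        have hx0 : 0 < x := lt_of_lt_of_le hR hx.1
        have h1 := (hwd x hx0).const_mul ((k:ℝ)+3)
        have h2 : HasDerivAt (fun y : ℝ => c * v R * y^(k+3)) (c * v R * (((k:ℝ)+3) * x^(k+2))) x := by
          have h3 := (hasDerivAt_pow (k+3) x).const_mul (c * v R)
          rw [show c * v R * (((k:ℝ)+3) * x^(k+2)) = c * v R * (((k+3:ℕ):ℝ) * x ^ (k + 3 - 1)) by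
            push_cast [show k+3-1 = k+2 from by omega]; ring]
          exact h3
        exact h1.sub h2
      · intro x hx
        have hx0 : 0 < x := lt_of_lt_of_le hR hx.1.le
        have hvv : v R ≤ v x := hvmono hR.le (le_of_lt hx0) (le_of_lt hx.1)
        have hlb := hW_lb x hx0
        have h2 : (0:ℝ) < x^(k+2) := pow_pos hx0 _
        have h5 := mul_le_mul_of_nonneg_left hlb hk3.le
        have h6 := mul_nonneg hk3.le (mul_nonneg (mul_nonneg hc0.le h2.le) (sub_nonneg.mpr hvv))
        nlinarith [h5, h6]
    have hw0 := hwglob R hR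
    have h7 := mul_nonneg hk3.le hw0.le
    beta_reduce at hle
    linarith [hle, h7]
  -- Step B'': doubling growth
  set K : ℝ := c / (((k:ℝ)+3) * 2^(k+2)) with hK_def
  have hK0 : 0 < K := div_pos hc0 (by positivity)
  have hKc : K * (((k:ℝ)+3) * 2^(k+2)) = c := by
    rw [hK_def]; field_simp
  have hstepB2 : ∀ R : ℝ, 0 < R → v R ^ m + K * v R * R^2 ≤ v (2*R) ^ m := by
    intro R hR
    have hdu_lb : ∀ x, 3*R/2 ≤ x → x ≤ 2*R → 2*K*v R*R ≤ du x := by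
      intro x hx1 hx2
      have hx0 : 0 < x := by linarith only [hx1, hR]
      have hB := hstepB R hR x (by linarith only [hx1, hR])
      have hpow1 : ((3:ℝ)/2)^(k+3) * R^(k+3) ≤ x^(k+3) := by
        have : ((3:ℝ)/2*R)^(k+3) ≤ x^(k+3) := pow_le_pow_left₀ (by linarith only [hR]) (by linarith only [hx1]) _
        rwa [mul_pow] at this
      have hpow2 : ((3:ℝ))^(1:ℕ) ≤ ((3:ℝ)/2)^(k+3) := by
        calc ((3:ℝ))^(1:ℕ) = 3 := by norm_num
        _ ≤ ((3:ℝ)/2)^3 := by norm_num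
        _ ≤ ((3:ℝ)/2)^(k+3) := pow_le_pow_right₀ (by norm_num) (by omega)
      have hRp : (0:ℝ) < R^(k+3) := pow_pos hR _
      have h3 : 2 * (c * v R) * R^(k+3) ≤ ((k:ℝ)+3) * w x := by
        have hcv : 0 < c * v R := mul_pos hc0 (hpos R hR.le)
        have : c * v R * (x^(k+3) - R^(k+3)) ≥ c * v R * (2 * R^(k+3)) := by
          apply mul_le_mul_of_nonneg_left _ hcv.le
          linarith only [hpow1, mul_le_mul_of_nonneg_right hpow2 hRp.le]
        linarith only [hB, this]
      have hwx : w x = x^(k+2) * du x := rfl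
      have hdux := hdu_pos x hx0
      have hxpow : x^(k+2) ≤ 2^(k+2) * R^(k+2) := by
        have : x^(k+2) ≤ (2*R)^(k+2) := pow_le_pow_left₀ hx0.le hx2 _
        rwa [mul_pow] at this
      have hRp2 : (0:ℝ) < R^(k+2) := pow_pos hR _
      have h4 : 2 * (c * v R) * R^(k+3) ≤ (((k:ℝ)+3) * 2^(k+2) * R^(k+2)) * du x := by
        have h9 := mul_le_mul_of_nonneg_right hxpow hdux.le
        rw [hwx] at h3
        linarith only [h3, mul_le_mul_of_nonneg_left h9 hk3.le]
      have hD : (0:ℝ) < ((k:ℝ)+3) * 2^(k+2) * R^(k+2) := mul_pos (by positivity) (pow_pos hR _)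
      have hRsplit : R^(k+3) = R^(k+2) * R := by rw [pow_succ]
      have h5 : (((k:ℝ)+3) * 2^(k+2) * R^(k+2)) * (2*K*v R*R) = 2 * (c * v R) * R^(k+3) := by
        rw [hRsplit, ← hKc]; ring
      have h6 : (((k:ℝ)+3) * 2^(k+2) * R^(k+2)) * (2*K*v R*R) ≤ (((k:ℝ)+3) * 2^(k+2) * R^(k+2)) * du x := by
        rw [h5]; exact h4
      exact le_of_mul_le_mul_left h6 hD
    have hCst : ∀ x ∈ Set.Icc (3*R/2) (2*R), HasDerivAt (fun y => v y ^ m - y * (2*K*v R*R)) (du x - 2*K*v R*R) x := by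
      intro x hx
      have hx0 : 0 < x := by have h9 := hx.1; linarith only [h9, hR]
      exact (hud2 x hx0).sub (hasDerivAt_mul_const (2*K*v R*R))
    have hf2 := deriv_le_aux (by linarith only [hR] : 3*R/2 ≤ 2*R) hCst
      (fun x hx => sub_nonneg.mpr (hdu_lb x hx.1.le hx.2.le))
    have hmono2 : v R ^ m ≤ v (3*R/2) ^ m :=
      Real.rpow_le_rpow (hpos R hR.le).le
        (hvmono hR.le (Set.mem_Ici.mpr (by linarith only [hR])) (by linarith only [hR])) hm0.le
    linarith only [hf2, hmono2]
  have hq1' : (0:ℝ) < q + 1 := by linarith only [hq1]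
  -- Step C: energy estimate
  have hstepC : ∀ R : ℝ, 0 < R → ∀ r : ℝ, R ≤ r →
      2*c*(R^(k+2))^2 * ((v r ^ m)^(q+1) - (v R ^ m)^(q+1)) ≤ (q+1) * (w r)^2 := by
    intro R hR r hr
    have hle : (q+1) * (w R)^2 - 2*c*(R^(k+2))^2 * ((v R ^ m)^(q+1))
        ≤ (q+1) * (w r)^2 - 2*c*(R^(k+2))^2 * ((v r ^ m)^(q+1)) := by
      apply deriv_le_aux (f := fun x => (q+1) * (w x)^2 - 2*c*(R^(k+2))^2 * ((v x ^ m)^(q+1)))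
        (F := fun x => (q+1) * (2 * w x * W x) - 2*c*(R^(k+2))^2 * (du x * (q+1) * (v x ^ m)^q)) hr
      · intro x hx
        have hx0 : 0 < x := lt_of_lt_of_le hR hx.1
        have h1 : HasDerivAt (fun y => (w y)^2) (2 * w x * W x) x := by
          have h2 := (hwd x hx0).pow 2
          norm_num at h2
          exact h2
        have h3 : HasDerivAt (fun y => (v y ^ m)^(q+1)) (du x * (q+1) * (v x ^ m)^q) x := by
          have h4 := (hud2 x hx0).rpow_const (p := q+1) (Or.inl (hu_pos x hx0.le).ne')
          have h5 : q + 1 - 1 = q := by ring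
          rwa [h5] at h4
        exact (h1.const_mul (q+1)).sub (h3.const_mul (2*c*(R^(k+2))^2))
      · intro x hx
        have hx0 : 0 < x := lt_of_lt_of_le hR hx.1.le
        have hwx : w x = x^(k+2) * du x := rfl
        have hdux := hdu_pos x hx0
        have hvx := hpos x hx0.le
        have huqx : (v x ^ m) ^ q = v x := huq x hx0.le
        have hWlb := hW_lb x hx0
        have hple : R^(k+2) ≤ x^(k+2) := pow_le_pow_left₀ hR.le hx.1.le _
        have hp0 : (0:ℝ) < R^(k+2) := pow_pos hR _
        have e1 : 0 < w x := hwglob x hx0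
        have e2 : 2 * w x * (c * x^(k+2) * v x) ≤ 2 * w x * W x :=
          mul_le_mul_of_nonneg_left hWlb (by linarith only [e1])
        have e3 : 2 * w x * (c * x^(k+2) * v x) = 2 * c * du x * v x * (x^(k+2))^2 := by
          rw [hwx]; ring
        have e4 : (R^(k+2))^2 ≤ (x^(k+2))^2 := pow_le_pow_left₀ hp0.le hple 2
        have e5 : 2 * c * du x * v x * (R^(k+2))^2 ≤ 2 * c * du x * v x * (x^(k+2))^2 :=
          mul_le_mul_of_nonneg_left e4
            (mul_nonneg (mul_nonneg (by linarith only [hc0] : (0:ℝ) ≤ 2*c) hdux.le) hvx.le)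
        have e6 : 2 * c * du x * v x * (R^(k+2))^2 ≤ 2 * w x * W x := by linarith only [e2, e3, e5]
        have e7 := mul_le_mul_of_nonneg_left e6 hq1'.le
        rw [huqx]
        linarith only [e7]
    linarith only [hle, mul_nonneg hq1'.le (sq_nonneg (w R))]
  -- constants for the final blow-up argument
  set csq : ℝ := Real.sqrt (c/(q+1)) with hcsq_def
  have hcsq0 : 0 < csq := Real.sqrt_pos.mpr (div_pos hc0 hq1')
  have hcsq2 : csq^2 = c/(q+1) := Real.sq_sqrt (div_pos hc0 hq1').le
  set c6 : ℝ := csq / 4^(k+2) with hc6_def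
  have hc60 : 0 < c6 := div_pos hcsq0 (pow_pos (by norm_num) _)
  set c7 : ℝ := c6 * (p-1) with hc7_def
  have hc70 : 0 < c7 := mul_pos hc60 (by linarith only [hp1])
  set R1 : ℝ := 1 + η^(m-1) / K with hR1_def
  set R2 : ℝ := 1 + (η^m)^(1-p) / (2*c7) with hR2_def
  set R : ℝ := max R1 R2 with hR_def
  have hR1ge : R1 ≤ R := le_max_left _ _
  have hR2ge : R2 ≤ R := le_max_right _ _
  have hR1ge1 : (1:ℝ) ≤ R1 := le_add_of_nonneg_right
    (div_nonneg (Real.rpow_nonneg hη.le _) hK0.le)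
  have hRge1 : (1:ℝ) ≤ R := le_trans hR1ge1 hR1ge
  have hR0 : (0:ℝ) < R := by linarith only [hRge1]
  clear_value csq c6 c7 R1 R2 R
  -- growth at scale R
  have hgrow : 2 * v R ^ m ≤ v (2*R) ^ m := by
    have hB2 := hstepB2 R hR0
    have e1 : v R ^ (m-1) ≤ η ^ (m-1) :=
      Real.rpow_le_rpow_of_nonpos hη (hv_ge R hR0.le) (by linarith only [hm1'])
    have e2 : v R ^ (m - 1) * v R ^ (1:ℝ) = v R ^ m := by
      rw [← Real.rpow_add (hpos R hR0.le)]; norm_num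
    have e2' : v R ^ (1:ℝ) = v R := Real.rpow_one _
    have hKR : η^(m-1) ≤ K * R^2 := by
      have h1 : η^(m-1)/K ≤ R := by
        have h0 : η^(m-1)/K = R1 - 1 := by rw [hR1_def]; ring
        linarith only [h0, hR1ge, hRge1]
      have h2 : K * (η^(m-1)/K) = η^(m-1) := mul_div_cancel₀ _ hK0.ne'
      have h3 := mul_le_mul_of_nonneg_left h1 hK0.le
      have h4 : 0 ≤ K*R*(R-1) := mul_nonneg (mul_nonneg hK0.le hR0.le) (by linarith only [hRge1])
      nlinarith only [h2, h3, h4]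
    have e3 : v R ^ m ≤ K * R^2 * v R := by
      have h5 := mul_le_mul_of_nonneg_right e1 (hpos R hR0.le).le
      have h6 := mul_le_mul_of_nonneg_right hKR (hpos R hR0.le).le
      rw [e2'] at e2
      linarith only [h5, h6, e2]
    linarith only [hB2, e3]
  -- half estimate
  have hhalf : ∀ r : ℝ, 2*R ≤ r → (v R ^ m)^(q+1) ≤ (v r ^ m)^(q+1) / 2 := by
    intro r hr
    have h2R0 : (0:ℝ) ≤ 2*R := by linarith only [hR0]
    have e1 : (v R ^ m)^(q+1) ≤ (v (2*R) ^ m / 2)^(q+1) :=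
      Real.rpow_le_rpow (hu_pos R hR0.le).le (by linarith only [hgrow]) (by linarith only [hq1])
    have e2 : (v (2*R) ^ m / 2)^(q+1) = (v (2*R) ^ m)^(q+1) / (2:ℝ)^(q+1) :=
      Real.div_rpow (hu_pos (2*R) h2R0).le (by norm_num) _
    have e3 : (2:ℝ) ≤ (2:ℝ)^(q+1) := by
      calc (2:ℝ) = (2:ℝ)^(1:ℝ) := (Real.rpow_one 2).symm
      _ ≤ (2:ℝ)^(q+1) := Real.rpow_le_rpow_of_exponent_le one_le_two (by linarith only [hq1])
    have e4 : (v (2*R) ^ m)^(q+1) / (2:ℝ)^(q+1) ≤ (v (2*R) ^ m)^(q+1) / 2 :=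
      div_le_div_of_nonneg_left (Real.rpow_nonneg (hu_pos (2*R) h2R0).le _) (by norm_num) e3
    have e5 : (v (2*R) ^ m)^(q+1) ≤ (v r ^ m)^(q+1) :=
      Real.rpow_le_rpow (hu_pos (2*R) h2R0).le
        (Real.rpow_le_rpow (hpos (2*R) h2R0).le
          (hvmono (Set.mem_Ici.mpr h2R0) (Set.mem_Ici.mpr (by linarith only [hr, hR0])) hr) hm0.le)
        (by linarith only [hq1])
    rw [e2] at e1
    linarith only [e1, e4, e5]
  -- pointwise lower bound for du on [2R, 4R]
  have hdu_lb2 : ∀ r : ℝ, 2*R ≤ r → r ≤ 4*R → c6 * (v r ^ m)^p ≤ du r := by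
    intro r hr1 hr2
    have hr0 : (0:ℝ) < r := by linarith only [hr1, hR0]
    have hC := hstepC R hR0 r (by linarith only [hr1, hR0])
    have hH := hhalf r hr1
    have hA : (0:ℝ) ≤ 2*c*(R^(k+2))^2 := mul_nonneg (by linarith only [hc0]) (sq_nonneg _)
    have e0 := mul_le_mul_of_nonneg_left hH hA
    have e1 : c * (R^(k+2))^2 * ((v r ^ m)^(q+1)) ≤ (q+1) * (w r)^2 := by linarith only [hC, e0]
    have hup := hu_pos r hr0.le
    have hp2 : p * (2:ℝ) = q + 1 := by rw [hp_def]; ring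
    have h3 : ((v r ^ m)^p)^(2:ℕ) = (v r ^ m)^(q+1) := by
      rw [← Real.rpow_natCast ((v r ^ m)^p) 2, ← Real.rpow_mul hup.le]
      push_cast
      rw [hp2]
    have e2 : (csq * R^(k+2) * (v r ^ m)^p)^2 = c/(q+1) * ((R^(k+2))^2 * (v r ^ m)^(q+1)) := by
      rw [mul_pow, mul_pow, hcsq2, h3]; ring
    have e3 : (csq * R^(k+2) * (v r ^ m)^p)^2 ≤ (w r)^2 := by
      rw [e2, div_mul_eq_mul_div, div_le_iff₀ hq1']
      linarith only [e1]
    have e4 : csq * R^(k+2) * (v r ^ m)^p ≤ w r := by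
      have h5 : 0 ≤ csq * R^(k+2) * (v r ^ m)^p :=
        mul_nonneg (mul_nonneg hcsq0.le (pow_nonneg hR0.le _)) (Real.rpow_nonneg (hu_pos r hr0.le).le _)
      have h6 : 0 ≤ w r := (hwglob r hr0).le
      have h7 := Real.sqrt_le_sqrt e3
      rwa [Real.sqrt_sq h5, Real.sqrt_sq h6] at h7
    have e5 : r^(k+2) ≤ 4^(k+2) * R^(k+2) := by
      have h8 : r^(k+2) ≤ (4*R)^(k+2) := pow_le_pow_left₀ hr0.le hr2 _
      rwa [mul_pow] at h8
    have e6 : c6 * (v r ^ m)^p * r^(k+2) ≤ du r * r^(k+2) := by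
      have hwr : w r = r^(k+2) * du r := rfl
      have h7 : c6 * (v r ^ m)^p * r^(k+2) ≤ c6 * (v r ^ m)^p * (4^(k+2) * R^(k+2)) :=
        mul_le_mul_of_nonneg_left e5 (mul_nonneg hc60.le (Real.rpow_nonneg (hu_pos r hr0.le).le _))
      have h8 : c6 * (v r ^ m)^p * (4^(k+2) * R^(k+2)) = csq * R^(k+2) * (v r ^ m)^p := by
        rw [hc6_def]; field_simp
      linarith only [e4, h7, h8, hwr]
    exact le_of_mul_le_mul_right e6 (pow_pos hr0 _)
  -- final integration and contradiction
  have hfin : 2*c7*R ≤ (η^m)^(1-p) := by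
    have hCst2 : ∀ x ∈ Set.Icc (2*R) (4*R),
        HasDerivAt (fun y => -((v y ^ m)^(1-p)) - y * c7)
          (-(du x * (1-p) * (v x ^ m)^(-p)) - c7) x := by
      intro x hx
      have hx0 : 0 < x := by have h9 := hx.1; linarith only [h9, hR0]
      have h1 := (hud2 x hx0).rpow_const (p := 1-p) (Or.inl (hu_pos x hx0.le).ne')
      have h2 : (1:ℝ) - p - 1 = -p := by ring
      rw [h2] at h1
      exact h1.neg.sub (hasDerivAt_mul_const c7)
    have hF4 : ∀ x ∈ Set.Ioo (2*R) (4*R), 0 ≤ -(du x * (1-p) * (v x ^ m)^(-p)) - c7 := by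
      intro x hx
      have hx0 : 0 < x := by have h9 := hx.1; linarith only [h9, hR0]
      have h1 := hdu_lb2 x hx.1.le hx.2.le
      have h2 : (0:ℝ) < (v x ^ m)^(-p) := Real.rpow_pos_of_pos (hu_pos x hx0.le) _
      have h3 : (v x ^ m)^p * (v x ^ m)^(-p) = 1 := by
        rw [← Real.rpow_add (hu_pos x hx0.le)]
        norm_num
      have h4 := mul_le_mul_of_nonneg_right
        (mul_le_mul_of_nonneg_right h1 (by linarith only [hp1] : (0:ℝ) ≤ p - 1)) h2.le
      have h5 : c6 * (v x ^ m)^p * (p-1) * (v x ^ m)^(-p) = c6 * (p-1) := by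
        rw [show c6 * (v x ^ m)^p * (p-1) * (v x ^ m)^(-p)
          = c6*(p-1)*((v x ^ m)^p * (v x ^ m)^(-p)) from by ring, h3, mul_one]
      have hc7e : c7 = c6 * (p-1) := hc7_def
      linarith only [h4, h5, hc7e]
    have hf4 := deriv_le_aux (by linarith only [hR0] : 2*R ≤ 4*R) hCst2 hF4
    have h5 : (0:ℝ) ≤ (v (4*R) ^ m)^(1-p) := Real.rpow_nonneg (hu_pos (4*R) (by linarith only [hR0])).le _
    have h6 : (v (2*R) ^ m)^(1-p) ≤ (η^m)^(1-p) := by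
      apply Real.rpow_le_rpow_of_nonpos (Real.rpow_pos_of_pos hη m)
      · exact Real.rpow_le_rpow hη.le (hv_ge (2*R) (by linarith only [hR0])) hm0.le
      · linarith only [hp1]
    linarith only [hf4, h5, h6]
  have h9 := mul_le_mul_of_nonneg_left hR2ge (by linarith only [hc70] : (0:ℝ) ≤ 2*c7)
  have h10 : 2*c7*R2 = 2*c7 + (η^m)^(1-p) := by
    rw [hR2_def, mul_add, mul_one, mul_div_cancel₀ _ (by linarith only [hc70] : (0:ℝ) < 2*c7).ne']
  linarith only [hfin, h9, h10, hc70]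
end

section
/- Let n ≥ 3, 0 < m < 1, α ≥ nβ, α > 0, η > 0. If v is a positive global solution on [0,∞) of ((n-1)/m)((v^m)'' + ((n-1)/r)(v^m)') + αv + βrv' = 0 with v(0)=η, v'(0)=0, then 0 < r² v(r)^{1-m} ≤ 2n(n-1)/(α(1-m)) for all r > 0. -/
open Real Set Filter

set_option maxHeartbeats 1000000 in
/-- Upper bound for r² v^(1-m) when α ≥ nβ and α > 0. -/
theorem stmt_2 (n : ℕ) (m α β η : ℝ) (hn : 3 ≤ n)
    (hm0 : 0 < m) (hm1 : m < 1)
    (hαβ : α ≥ (n : ℝ) * β) (hα : 0 < α) (hη : 0 < η)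
    (v : ℝ → ℝ) (hv : ∀ r, 0 ≤ r → 0 < v r)
    (hreg : ContDiffOn ℝ 2 v (Set.Ici 0))
    (hv0 : v 0 = η) (hv'0 : deriv v 0 = 0)
    (hode : ∀ r, 0 < r →
      ((n : ℝ) - 1) / m *
          (deriv (deriv (fun s => v s ^ m)) r
            + ((n : ℝ) - 1) / r * deriv (fun s => v s ^ m) r)
        + α * v r + β * r * deriv v r = 0) :
    ∀ r, 0 < r →
      0 < r ^ 2 * v r ^ (1 - m) ∧
      r ^ 2 * v r ^ (1 - m) ≤ 2 * n * ((n : ℝ) - 1) / (α * (1 - m)) := by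
  have hn3 : (3:ℝ) ≤ (n:ℝ) := by exact_mod_cast hn
  have hn1pos : (0:ℝ) < (n:ℝ) - 1 := by linarith
  have hnpos : (0:ℝ) < (n:ℝ) := by linarith
  have hn0 : (n:ℝ) ≠ 0 := hnpos.ne'
  have hn1 : (n:ℝ) - 1 ≠ 0 := hn1pos.ne'
  have hm' : m ≠ 0 := hm0.ne'
  set w : ℝ → ℝ := fun s => v s ^ m with hwdef
  set W : ℝ → ℝ := deriv w with hWdef
  -- basic derivative facts
  have hvC2 : ∀ s : ℝ, 0 < s → ContDiffAt ℝ 2 v s :=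
    fun s hs => hreg.contDiffAt (Ici_mem_nhds hs)
  have hvd : ∀ s : ℝ, 0 < s → HasDerivAt v (deriv v s) s :=
    fun s hs => ((hvC2 s hs).differentiableAt (by norm_num)).hasDerivAt
  have hwd : ∀ s : ℝ, 0 < s → HasDerivAt w (m * v s ^ (m-1) * deriv v s) s := by
    intro s hs
    have h1 := Real.hasDerivAt_rpow_const (x := v s) (p := m) (Or.inl (hv s hs.le).ne')
    have h2 := h1.comp s (hvd s hs)
    exact h2
  have hWeq : ∀ s : ℝ, 0 < s → W s = m * v s ^ (m-1) * deriv v s :=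
    fun s hs => (hwd s hs).deriv
  have hwC2 : ContDiffOn ℝ 2 w (Ioi 0) := fun s hs =>
    ((hvC2 s hs).rpow_const_of_ne (hv s (le_of_lt hs)).ne').contDiffWithinAt
  have hWC1 : ContDiffOn ℝ 1 W (Ioi 0) := hwC2.deriv_of_isOpen isOpen_Ioi (by norm_num)
  have hWd : ∀ s : ℝ, 0 < s → DifferentiableAt ℝ W s := fun s hs =>
    ((hWC1.contDiffAt (Ioi_mem_nhds hs)).differentiableAt (by norm_num))
  -- the auxiliary function G
  set G : ℝ → ℝ := fun s =>
      (n:ℝ) * (((n:ℝ)-1)/m) * (s^(n-1) * W s) + α * (s^n * v s) with hGdef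
  have hG0 : G 0 = 0 := by
    rw [hGdef]
    simp [zero_pow (show n-1 ≠ 0 by omega), zero_pow (show n ≠ 0 by omega)]
  -- derivative of G
  have hGd : ∀ s : ℝ, 0 < s →
      HasDerivAt G ((α - (n:ℝ)*β) * (s^n * deriv v s)) s := by
    intro s hs
    have hs0 : s ≠ 0 := hs.ne'
    have hA : HasDerivAt (fun t => t^(n-1) * W t)
        (((n-1:ℕ):ℝ) * s^(n-1-1) * W s + s^(n-1) * deriv W s) s :=
      (hasDerivAt_pow (n-1) s).mul ((hWd s hs).hasDerivAt)
    have hB : HasDerivAt (fun t => t^n * v t)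
        (((n:ℕ):ℝ) * s^(n-1) * v s + s^n * deriv v s) s :=
      (hasDerivAt_pow n s).mul (hvd s hs)
    have hAB := (hA.const_mul ((n:ℝ) * (((n:ℝ)-1)/m))).add (hB.const_mul α)
    have key := hode s hs
    have hc : ((n-1:ℕ):ℝ) = (n:ℝ) - 1 := by
      have : 1 ≤ n := by omega
      push_cast [this]; ring
    have h1 : s^(n-1) = s * s^(n-1-1) := by
      rw [← pow_succ']; congr 1; omega
    have h2 : s^n = s * s^(n-1) := by
      rw [← pow_succ']; congr 1; omega
    have hdW : deriv W s = (-((n:ℝ)-1)) * W s / s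
        - m * (α * v s + β * s * deriv v s) / ((n:ℝ)-1) := by
      field_simp at key ⊢
      linear_combination key
    have halg : (n:ℝ) * (((n:ℝ)-1)/m) *
          (((n-1:ℕ):ℝ) * s^(n-1-1) * W s + s^(n-1) * deriv W s)
        + α * (((n:ℕ):ℝ) * s^(n-1) * v s + s^n * deriv v s)
        = (α - (n:ℝ)*β) * (s^n * deriv v s) := by
      rw [hdW, hc, h2, h1]
      field_simp
      ring
    rw [← halg]
    exact hAB
  -- continuity of G on [0, ∞)
  have hvc : ContinuousOn v (Ici 0) := hreg.continuousOn
  have hdwc : ContinuousOn (derivWithin v (Ici 0)) (Ici 0) :=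
    hreg.continuousOn_derivWithin (uniqueDiffOn_Ici 0) (by norm_num)
  have hrpc : ContinuousOn (fun s => v s ^ (m-1)) (Ici (0:ℝ)) :=
    hvc.rpow_const (fun s hs => Or.inl (hv s hs).ne')
  have hGcont : ContinuousOn G (Ici 0) := by
    have hG0cont : ContinuousOn (fun s =>
        (n:ℝ) * (((n:ℝ)-1)/m) *
          (s^(n-1) * (m * v s ^ (m-1) * derivWithin v (Ici 0) s))
        + α * (s^n * v s)) (Ici 0) := by
      apply ContinuousOn.add
      · exact continuousOn_const.mul ((continuousOn_pow (n-1)).mul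
          ((continuousOn_const.mul hrpc).mul hdwc))
      · exact continuousOn_const.mul ((continuousOn_pow n).mul hvc)
    apply hG0cont.congr
    intro s hs
    rcases eq_or_lt_of_le (mem_Ici.mp hs) with h0 | h0
    · rw [← h0, hG0]
      simp [zero_pow (show n-1 ≠ 0 by omega), zero_pow (show n ≠ 0 by omega)]
    · rw [hGdef]
      simp only
      rw [hWeq s h0, derivWithin_of_mem_nhds (Ici_mem_nhds h0)]
  -- Step A : G ≤ 0 on [0, ∞)
  have hGle : ∀ s : ℝ, 0 ≤ s → G s ≤ 0 := by
    intro r1 hr1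
    by_contra hpos
    push_neg at hpos
    have hr1pos : 0 < r1 := by
      rcases eq_or_lt_of_le hr1 with h | h
      · exfalso; rw [← h, hG0] at hpos; exact lt_irrefl _ hpos
      · exact h
    -- the set of points where G ≤ 0
    set S : Set ℝ := {t | t ∈ Icc 0 r1 ∧ G t ≤ 0} with hSdef
    have hSsub : S ⊆ Icc 0 r1 := fun t ht => ht.1
    have hS0 : (0:ℝ) ∈ S := ⟨⟨le_rfl, hr1⟩, le_of_eq hG0⟩
    have hSclosed : IsClosed S := by
      have h1 := (hGcont.mono (Icc_subset_Ici_self : Icc (0:ℝ) r1 ⊆ Ici 0)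
        ).preimage_isClosed_of_isClosed isClosed_Icc (isClosed_Iic (a := (0:ℝ)))
      convert h1 using 1
      rfl
    have hScomp : IsCompact S := isCompact_Icc.of_isClosed_subset hSclosed hSsub
    set r0 := sSup S with hr0def
    have hr0S : r0 ∈ S := hScomp.sSup_mem ⟨0, hS0⟩
    have hr0lt : r0 < r1 := by
      rcases eq_or_lt_of_le hr0S.1.2 with h | h
      · exfalso; rw [h] at hr0S; linarith [hr0S.2]
      · exact h
    have hr0nonneg : 0 ≤ r0 := hr0S.1.1
    have hmid : ∀ t, r0 < t → t ≤ r1 → 0 < G t := by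
      intro t h1 h2
      by_contra hle
      push_neg at hle
      have : t ∈ S := ⟨⟨le_trans hr0nonneg h1.le, h2⟩, hle⟩
      exact absurd (le_csSup (hScomp.bddAbove) this) (not_le.2 h1)
    -- bound on c
    set c : ℝ → ℝ := fun s =>
      (α - (n:ℝ)*β) * s * v s ^ (1-m) / ((n:ℝ)*((n:ℝ)-1)) with hcdef
    have hccont : ContinuousOn c (Icc 0 r1) := by
      apply ContinuousOn.div_const
      exact (continuousOn_const.mul (continuousOn_id.mono (fun x _ => trivial))).mul
        ((hvc.mono Icc_subset_Ici_self).rpow_const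
          (fun s hs => Or.inl (hv s hs.1).ne'))
    obtain ⟨x₀, hx₀, hx₀max⟩ :=
      isCompact_Icc.exists_isMaxOn ⟨0, ⟨le_rfl, hr1⟩⟩ hccont
    set C := c x₀ with hCdef
    have hC : ∀ s ∈ Icc (0:ℝ) r1, c s ≤ C := fun s hs => hx₀max hs
    have hcnonneg : ∀ s ∈ Icc (0:ℝ) r1, 0 ≤ c s := by
      intro s hs
      apply div_nonneg _ (by positivity)
      have h1 : 0 ≤ α - (n:ℝ)*β := by linarith
      have h2 : 0 < v s ^ (1-m) := Real.rpow_pos_of_pos (hv s hs.1) _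
      have := hs.1
      positivity
    -- the function h = G * exp(-C t) is antitone on [r0, r1]
    set h : ℝ → ℝ := fun t => G t * Real.exp (-C * t) with hhdef
    have hanti : AntitoneOn h (Icc r0 r1) := by
      apply antitoneOn_of_deriv_nonpos (convex_Icc _ _)
      · exact (hGcont.mono (Icc_subset_Ici_self.trans
            (Ici_subset_Ici.mpr hr0nonneg) : Icc r0 r1 ⊆ Ici 0)).mul
          (Real.continuous_exp.comp (continuous_const.mul continuous_id)).continuousOn
      · intro t ht
        rw [interior_Icc] at ht
        have htpos : 0 < t := lt_of_le_of_lt hr0nonneg ht.1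
        exact (((hGd t htpos).mul (((Real.hasDerivAt_exp _).comp t
          ((hasDerivAt_id t).const_mul (-C)))) ).differentiableAt).differentiableWithinAt
      · intro t ht
        rw [interior_Icc] at ht
        have htpos : 0 < t := lt_of_le_of_lt hr0nonneg ht.1
        have hexp : HasDerivAt (fun u => Real.exp (-C * u)) (Real.exp (-C * t) * (-C)) t := by
          have := ((hasDerivAt_id t).const_mul (-C)).exp
          simpa [mul_comm] using this
        have hht : HasDerivAt h
            ((α - (n:ℝ)*β) * (t^n * deriv v t) * Real.exp (-C * t)
              + G t * (Real.exp (-C * t) * (-C))) t := (hGd t htpos).mul hexp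
        rw [hht.deriv]
        -- key identity : G' = c·G - c·(α t^n v)
        have hGt : 0 < G t := hmid t ht.1 ht.2.le
        have htmem : t ∈ Icc (0:ℝ) r1 := ⟨htpos.le, ht.2.le⟩
        have hvt : 0 < v t := hv t htpos.le
        have hid : v t ^ (1-m) * v t ^ (m-1) = 1 := by
          rw [← Real.rpow_add hvt]; norm_num
        have hkey : (α - (n:ℝ)*β) * (t^n * deriv v t)
            = c t * G t - c t * (α * (t^n * v t)) := by
          rw [hcdef, hGdef]
          simp only
          rw [hWeq t htpos]
          have h2 : t^n = t * t^(n-1) := by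
            rw [← pow_succ']; congr 1; omega
          rw [h2]
          have hq : v t ^ (1-m) = (v t ^ (m-1))⁻¹ := by
            rw [show (1-m) = -(m-1) by ring, Real.rpow_neg hvt.le]
          have hp0 : v t ^ (m-1) ≠ 0 := (Real.rpow_pos_of_pos hvt _).ne'
          rw [hq]
          field_simp
          ring
        rw [hkey]
        have he : 0 < Real.exp (-C * t) := Real.exp_pos _
        have h1 : c t ≤ C := hC t htmem
        have h2 : 0 ≤ c t := hcnonneg t htmem
        have h3 : 0 ≤ α * (t^n * v t) := by positivity
        have hint1 : c t * G t * Real.exp (-C*t) ≤ C * G t * Real.exp (-C*t) :=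
          mul_le_mul_of_nonneg_right (mul_le_mul_of_nonneg_right h1 hGt.le) he.le
        have hint2 : 0 ≤ c t * (α * (t^n * v t)) * Real.exp (-C*t) :=
          mul_nonneg (mul_nonneg h2 h3) he.le
        nlinarith [hint1, hint2]
    -- conclude the contradiction
    have hle1 : h r1 ≤ h r0 :=
      hanti (left_mem_Icc.mpr hr0lt.le) (right_mem_Icc.mpr hr0lt.le) hr0lt.le
    have hr0' : h r0 ≤ 0 := by
      rw [hhdef]
      simp only
      exact mul_nonpos_of_nonpos_of_nonneg hr0S.2 (Real.exp_pos _).le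
    have : 0 < h r1 := by
      rw [hhdef]
      exact mul_pos hpos (Real.exp_pos _)
    linarith
  -- Step B/C : the function ψ = v^(m-1) - k/2 s²  is monotone
  set k : ℝ := (1-m)*α/((n:ℝ)*((n:ℝ)-1)) with hkdef
  have hkpos : 0 < k := by
    apply div_pos (by nlinarith) (by positivity)
  set ψ : ℝ → ℝ := fun s => v s ^ (m-1) - k/2 * s^2 with hψdef
  have hψd : ∀ s : ℝ, 0 < s →
      HasDerivAt ψ ((m-1) * v s ^ (m-1-1) * deriv v s - k * s) s := by
    intro s hs
    have h1 := (Real.hasDerivAt_rpow_const (x := v s) (p := m-1)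
      (Or.inl (hv s hs.le).ne')).comp s (hvd s hs)
    have h2 : HasDerivAt (fun t : ℝ => k/2 * t^2) (k/2 * (2*s)) s := by
      simpa using (hasDerivAt_pow 2 s).const_mul (k/2)
    have h3 : HasDerivAt ψ ((m-1) * v s ^ (m-1-1) * deriv v s - k/2 * (2*s)) s := h1.sub h2
    convert h3 using 1
    ring
  have hψmono : MonotoneOn ψ (Ici 0) := by
    apply monotoneOn_of_deriv_nonneg (convex_Ici 0)
    · exact hrpc.sub ((continuous_const.mul (continuous_pow 2)).continuousOn)
    · intro s hs
      rw [interior_Ici] at hs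
      exact (hψd s hs).differentiableAt.differentiableWithinAt
    · intro s hs
      rw [interior_Ici] at hs
      rw [(hψd s hs).deriv]
      have hvs : 0 < v s := hv s hs.le
      have hs1 : 0 < s^(n-1) := pow_pos hs _
      have h2 : s^n = s * s^(n-1) := by
        rw [← pow_succ']; congr 1; omega
      have hGs := hGle s hs.le
      rw [hGdef] at hGs
      simp only at hGs
      rw [hWeq s hs, h2] at hGs
      have hmm : (n:ℝ)*(((n:ℝ)-1)/m)*(s^(n-1) * (m * v s^(m-1) * deriv v s))
          = (n:ℝ)*((n:ℝ)-1)*(s^(n-1) * (v s^(m-1) * deriv v s)) := by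
        field_simp
      have hpa : s^(n-1) * ((n:ℝ)*((n:ℝ)-1) * (v s^(m-1) * deriv v s))
          ≤ s^(n-1) * (-(α * (s * v s))) := by linarith [hGs, hmm]
      have hpa2 : (n:ℝ)*((n:ℝ)-1) * (v s^(m-1) * deriv v s)
          ≤ -(α * (s * v s)) := (mul_le_mul_iff_right₀ hs1).mp hpa
      have hqp : v s * v s ^ (m-1-1) = v s ^ (m-1) := by
        nth_rewrite 1 [← Real.rpow_one (v s)]
        rw [← Real.rpow_add hvs]
        norm_num
      rw [← hqp] at hpa2
      have hpa3 : v s * ((n:ℝ)*((n:ℝ)-1) * (v s ^ (m-1-1) * deriv v s))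
          ≤ v s * (-(α * s)) := by linarith [hpa2]
      have hqa : (n:ℝ)*((n:ℝ)-1) * (v s ^ (m-1-1) * deriv v s) ≤ -(α * s) :=
        (mul_le_mul_iff_right₀ hvs).mp hpa3
      have h6 := mul_le_mul_of_nonpos_left hqa
        (by
          apply div_nonpos_of_nonpos_of_nonneg <;> nlinarith
          : (m-1)/((n:ℝ)*((n:ℝ)-1)) ≤ 0)
      have e1 : (m-1)/((n:ℝ)*((n:ℝ)-1)) * ((n:ℝ)*((n:ℝ)-1) * (v s ^ (m-1-1) * deriv v s))
          = (m-1) * v s ^ (m-1-1) * deriv v s := by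
        field_simp
      have e2 : (m-1)/((n:ℝ)*((n:ℝ)-1)) * (-(α * s)) = k * s := by
        rw [hkdef]; field_simp; ring
      rw [e1, e2] at h6
      linarith
  -- conclusion
  intro r hr
  have hvr : 0 < v r := hv r hr.le
  have hvr1m : 0 < v r ^ (1-m) := Real.rpow_pos_of_pos hvr _
  constructor
  · positivity
  · have hmono := hψmono (self_mem_Ici) (mem_Ici.mpr hr.le) hr.le
    rw [hψdef] at hmono
    simp only [hv0] at hmono
    norm_num at hmono
    have hηpos : 0 < η ^ (m-1) := Real.rpow_pos_of_pos hη _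
    have hφ : k/2 * r^2 ≤ v r ^ (m-1) := by linarith [hmono, hηpos]
    have hφpos : 0 < k/2 * r^2 := by positivity
    have hfl : v r ^ (1-m) = (v r ^ (m-1))⁻¹ := by
      rw [show 1-m = -(m-1) by ring, Real.rpow_neg hvr.le]
    rw [hfl]
    have h7 : (v r ^ (m-1))⁻¹ ≤ (k/2*r^2)⁻¹ := by
      apply inv_anti₀ hφpos hφ
    calc r^2 * (v r ^ (m-1))⁻¹ ≤ r^2 * (k/2*r^2)⁻¹ :=
          mul_le_mul_of_nonneg_left h7 (by positivity)
      _ = 2/k := by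
          field_simp
      _ = 2 * n * ((n:ℝ)-1) / (α * (1-m)) := by
          rw [hkdef]; field_simp
end

section
/- Let n ≥ 3, 0 < m < 1, α ≥ nβ, α > 0, η > 0. If v is a positive global solution on [0,∞) of ((n-1)/m)((v^m)'' + ((n-1)/r)(v^m)') + αv + βrv' = 0 with v(0)=η, v'(0)=0, then (α/(n(n-1))) r² v(r)^{1-m} + r v'(r)/v(r) ≤ 0 for all r > 0; in particular v'(r) < 0 for all r > 0. -/
open Real Set Filter Topology

set_option maxHeartbeats 1600000

/-- Differential inequality and monotonicity when α ≥ nβ and α > 0. -/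
theorem stmt_3 (n : ℕ) (m α β η : ℝ) (hn : 3 ≤ n)
    (hm0 : 0 < m) (hm1 : m < 1)
    (hαβ : α ≥ (n : ℝ) * β) (hα : 0 < α) (hη : 0 < η)
    (v : ℝ → ℝ) (hv : ∀ r, 0 ≤ r → 0 < v r)
    (hreg : ContDiffOn ℝ 2 v (Set.Ici 0))
    (hv0 : v 0 = η) (hv'0 : deriv v 0 = 0)
    (hode : ∀ r, 0 < r →
      ((n : ℝ) - 1) / m *
          (deriv (deriv (fun s => v s ^ m)) r
            + ((n : ℝ) - 1) / r * deriv (fun s => v s ^ m) r)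
        + α * v r + β * r * deriv v r = 0) :
    ∀ r, 0 < r →
      (α / (n * ((n : ℝ) - 1)) * (r ^ 2 * v r ^ (1 - m)) + r * deriv v r / v r ≤ 0
        ∧ deriv v r < 0) := by
  obtain ⟨k, rfl⟩ : ∃ k, n = k + 3 := ⟨n - 3, by omega⟩
  have hkR : ((k + 3 : ℕ) : ℝ) = (k : ℝ) + 3 := by push_cast; ring
  rw [hkR] at hαβ
  set w : ℝ → ℝ := fun s => v s ^ m with hwdef
  have hvne : ∀ r ∈ Ici (0:ℝ), v r ≠ 0 := fun r hr => (hv r hr).ne'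
  have hw : ContDiffOn ℝ 2 w (Ici 0) := hreg.rpow_const_of_ne hvne
  -- derivatives at interior points
  have hvd : ∀ r : ℝ, 0 < r → HasDerivAt v (deriv v r) r := by
    intro r hr
    have h1 : ContDiffAt ℝ 2 v r := (hreg r hr.le).contDiffAt (Ici_mem_nhds hr)
    exact (h1.differentiableAt (by norm_num)).hasDerivAt
  have hwd : ∀ r : ℝ, 0 < r →
      HasDerivAt w (deriv v r * m * v r ^ (m - 1)) r := by
    intro r hr
    exact (hvd r hr).rpow_const (Or.inl (hv r hr.le).ne')
  have hderivw : ∀ r : ℝ, 0 < r → deriv w r = deriv v r * m * v r ^ (m - 1) :=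
    fun r hr => (hwd r hr).deriv
  -- second derivative data on Ioi 0
  have hw2 : ContDiffOn ℝ 1 (deriv w) (Ioi 0) :=
    (hw.mono Ioi_subset_Ici_self).deriv_of_isOpen isOpen_Ioi (by norm_num)
  have hw2d : ∀ r : ℝ, 0 < r → HasDerivAt (deriv w) (deriv (deriv w) r) r := by
    intro r hr
    exact ((hw2.differentiableOn one_ne_zero).differentiableAt
      (isOpen_Ioi.mem_nhds hr)).hasDerivAt
  have hvc1 : ContDiffOn ℝ 1 (deriv v) (Ioi 0) :=
    (hreg.mono Ioi_subset_Ici_self).deriv_of_isOpen isOpen_Ioi (by norm_num)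
  have hv'cont : ContinuousOn (deriv v) (Ioi 0) := hvc1.continuousOn
  -- derivWithin versions, continuous up to 0
  have hW : ContinuousOn (derivWithin w (Ici 0)) (Ici 0) :=
    hw.continuousOn_derivWithin (uniqueDiffOn_Ici 0) (by norm_num)
  have hV : ContinuousOn (derivWithin v (Ici 0)) (Ici 0) :=
    hreg.continuousOn_derivWithin (uniqueDiffOn_Ici 0) (by norm_num)
  have hWw : ∀ r : ℝ, 0 < r → derivWithin w (Ici 0) r = deriv w r :=
    fun r hr => derivWithin_of_mem_nhds (Ici_mem_nhds hr)
  have hVv : ∀ r : ℝ, 0 < r → derivWithin v (Ici 0) r = deriv v r :=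
    fun r hr => derivWithin_of_mem_nhds (Ici_mem_nhds hr)
  -- constants
  set c : ℝ := m * α / (((k:ℝ) + 3) * ((k:ℝ) + 2)) with hc
  have hcpos : 0 < c := by
    apply div_pos (by positivity)
    positivity
  set c₂ : ℝ := m / ((k:ℝ) + 2) * (α / ((k:ℝ) + 3) - β) with hc2
  have hc2nonneg : 0 ≤ c₂ := by
    apply mul_nonneg (by positivity)
    rw [sub_nonneg, le_div_iff₀ (by positivity : (0:ℝ) < (k:ℝ) + 3)]
    linarith [hαβ]
  -- the key function K
  set K : ℝ → ℝ := fun r => r ^ (k+2) * derivWithin w (Ici 0) r + c * (r ^ (k+3) * v r)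
    with hKdef
  have hKcont : ContinuousOn K (Ici 0) := by
    apply ContinuousOn.add
    · exact (continuous_pow (k+2)).continuousOn.mul hW
    · exact continuousOn_const.mul ((continuous_pow (k+3)).continuousOn.mul hreg.continuousOn)
  have hK0 : K 0 = 0 := by simp [hKdef]
  -- derivative of K at positive points
  have hKD : ∀ r : ℝ, 0 < r → HasDerivAt K (c₂ * (r ^ (k+3) * deriv v r)) r := by
    intro r hr
    have h1 : HasDerivAt (fun s : ℝ => s ^ (k+2) * deriv w s + c * (s ^ (k+3) * v s))
        ((((k:ℝ)+2) * r ^ (k+1) * deriv w r + r ^ (k+2) * deriv (deriv w) r)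
          + c * ((((k:ℝ)+3) * r ^ (k+2) * v r) + r ^ (k+3) * deriv v r)) r := by
      have hp1 : HasDerivAt (fun s : ℝ => s ^ (k+2)) (((k:ℝ)+2) * r ^ (k+1)) r := by
        simpa using hasDerivAt_pow (k+2) r
      have hp2 : HasDerivAt (fun s : ℝ => s ^ (k+3)) (((k:ℝ)+3) * r ^ (k+2)) r := by
        simpa using hasDerivAt_pow (k+3) r
      exact (hp1.mul (hw2d r hr)).add
        (((hp2.mul (hvd r hr))).const_mul c)
    have heq : K =ᶠ[𝓝 r] fun s : ℝ => s ^ (k+2) * deriv w s + c * (s ^ (k+3) * v s) := by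
      filter_upwards [Ioi_mem_nhds hr] with s hs
      simp only [hKdef, hWw s hs]
    have h2 := h1.congr_of_eventuallyEq heq
    refine h2.congr_deriv ?_
    symm
    have hode' := hode r hr
    rw [hkR] at hode'
    have hmne : m ≠ 0 := hm0.ne'
    have hrne : r ≠ 0 := hr.ne'
    have hode2 : ((k:ℝ)+2) * (r * deriv (deriv w) r + ((k:ℝ)+2) * deriv w r)
        + m * r * (α * v r + β * r * deriv v r) = 0 := by
      have h3 : ((k:ℝ)+3) - 1 = (k:ℝ)+2 := by ring
      rw [h3] at hode'
      field_simp at hode'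
      linarith [hode']
    rw [hc2, hc]
    have hk2 : ((k:ℝ)+2) ≠ 0 := by positivity
    have hk3 : ((k:ℝ)+3) ≠ 0 := by positivity
    field_simp
    linear_combination (-(((k:ℝ)+3) * r^(k+1))) * hode2
  -- K ≤ 0 implies v' < 0
  have hKv : ∀ r : ℝ, 0 < r → K r ≤ 0 → deriv v r < 0 := by
    intro r hr hKr
    have h1 : 0 < c * (r ^ (k+3) * v r) := by
      have := hv r hr.le
      positivity
    have h2 : r ^ (k+2) * derivWithin w (Ici 0) r < 0 := by
      simp only [hKdef] at hKr; linarith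
    have h3 : derivWithin w (Ici 0) r < 0 := by
      by_contra h
      push_neg at h
      nlinarith [pow_pos hr (k+2)]
    rw [hWw r hr, hderivw r hr] at h3
    nlinarith [Real.rpow_pos_of_pos (hv r hr.le) (m-1),
      mul_pos hm0 (Real.rpow_pos_of_pos (hv r hr.le) (m-1))]
  -- positivity of the source term near 0
  obtain ⟨δ, hδpos, hδ⟩ : ∃ δ > 0, ∀ s ∈ Icc (0:ℝ) δ,
      0 < α * v s + β * (s * derivWithin v (Ici 0) s) := by
    have hcont : ContinuousWithinAt (fun s => α * v s + β * (s * derivWithin v (Ici 0) s))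
        (Ici 0) 0 := by
      apply ContinuousWithinAt.add
      · exact (continuousWithinAt_const.mul (hreg.continuousOn 0 self_mem_Ici))
      · exact continuousWithinAt_const.mul
          ((continuousWithinAt_id).mul (hV 0 self_mem_Ici))
    have h00 : α * v 0 + β * ((0:ℝ) * derivWithin v (Ici 0) 0) = α * η := by
      simp [hv0]
    have hev : ∀ᶠ s in 𝓝[Ici 0] (0:ℝ),
        0 < α * v s + β * (s * derivWithin v (Ici 0) s) := by
      apply hcont.eventually_const_lt
      simpa [hv0] using mul_pos hα hη
    rw [show Ici (0:ℝ) = Ici 0 from rfl] at hev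
    have := hev.exists_mem
    obtain ⟨t, ht, htsub⟩ := eventually_iff_exists_mem.1 hev
    rw [mem_nhdsGE_iff_exists_Icc_subset] at ht
    obtain ⟨u, hu, husub⟩ := ht
    exact ⟨u, hu, fun s hs => htsub s (husub hs)⟩
  -- v' < 0 on (0, δ]
  have hv'small : ∀ r ∈ Ioc (0:ℝ) δ, deriv v r < 0 := by
    have hganti : StrictAntiOn (fun r : ℝ => r ^ (k+2) * derivWithin w (Ici 0) r)
        (Icc 0 δ) := by
      apply strictAntiOn_of_deriv_neg (convex_Icc 0 δ)
      · exact ((continuous_pow (k+2)).continuousOn.mul (hW.mono (Icc_subset_Ici_self)))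
      · intro x hx
        rw [interior_Icc] at hx
        have hx0 : 0 < x := hx.1
        have hgd : HasDerivAt (fun r : ℝ => r ^ (k+2) * derivWithin w (Ici 0) r)
            ((((k:ℝ)+2) * x ^ (k+1) * deriv w x + x ^ (k+2) * deriv (deriv w) x)) x := by
          have hp1 : HasDerivAt (fun s : ℝ => s ^ (k+2)) (((k:ℝ)+2) * x ^ (k+1)) x := by
            simpa using hasDerivAt_pow (k+2) x
          have h1 := hp1.mul (hw2d x hx0)
          apply h1.congr_of_eventuallyEq
          filter_upwards [Ioi_mem_nhds hx0] with s hs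
          rw [hWw s hs]; rfl
        rw [hgd.deriv]
        have hode' := hode x hx0
        rw [hkR] at hode'
        have hode2 : ((k:ℝ)+2) * (x * deriv (deriv w) x + ((k:ℝ)+2) * deriv w x)
            + m * x * (α * v x + β * x * deriv v x) = 0 := by
          have h3 : ((k:ℝ)+3) - 1 = (k:ℝ)+2 := by ring
          rw [h3] at hode'
          field_simp at hode'
          linarith [hode']
        have hsrc : 0 < α * v x + β * (x * deriv v x) := by
          have := hδ x ⟨hx0.le, hx.2.le⟩
          rwa [hVv x hx0] at this
        have hkey : (((k:ℝ)+2)) * (((k:ℝ)+2) * x ^ (k+1) * deriv w x + x ^ (k+2) * deriv (deriv w) x)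
            = -(m * (x ^ (k+1) * (x * (α * v x + β * x * deriv v x)))) := by
          linear_combination (x^(k+1)) * hode2
        have hx1 : 0 < x ^ (k+1) := pow_pos hx0 _
        have hsrc2 : 0 < x * (α * v x + β * x * deriv v x) := by
          apply mul_pos hx0
          nlinarith [hsrc]
        nlinarith [hkey, mul_pos hm0 (mul_pos hx1 hsrc2)]
    intro r hr
    have hg0 : (fun r : ℝ => r ^ (k+2) * derivWithin w (Ici 0) r) r
        < (fun r : ℝ => r ^ (k+2) * derivWithin w (Ici 0) r) 0 :=
      hganti ⟨le_rfl, hδpos.le⟩ ⟨hr.1.le, hr.2⟩ hr.1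
    simp only at hg0
    rw [zero_pow (by omega), zero_mul] at hg0
    have h3 : derivWithin w (Ici 0) r < 0 := by
      by_contra h
      push_neg at h
      nlinarith [pow_pos hr.1 (k+2)]
    rw [hWw r hr.1, hderivw r hr.1] at h3
    nlinarith [Real.rpow_pos_of_pos (hv r hr.1.le) (m-1),
      mul_pos hm0 (Real.rpow_pos_of_pos (hv r hr.1.le) (m-1))]
  -- helper: K is antitone on intervals where v' < 0
  have hKanti : ∀ a b : ℝ, 0 ≤ a → (∀ s ∈ Ioo a b, deriv v s < 0) →
      AntitoneOn K (Icc a b) := by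
    intro a b ha hneg
    apply antitoneOn_of_deriv_nonpos (convex_Icc a b)
    · exact hKcont.mono (fun x hx => ha.trans hx.1)
    · intro x hx
      rw [interior_Icc] at hx
      exact ((hKD x (lt_of_le_of_lt ha hx.1)).differentiableAt).differentiableWithinAt
    · intro x hx
      rw [interior_Icc] at hx
      have hx0 : 0 < x := lt_of_le_of_lt ha hx.1
      rw [(hKD x hx0).deriv]
      have h1 := hneg x hx
      have h2 : x ^ (k+3) * deriv v x ≤ 0 :=
        le_of_lt (mul_neg_of_pos_of_neg (pow_pos hx0 _) h1)
      exact mul_nonpos_of_nonneg_of_nonpos hc2nonneg h2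
  -- K ≤ 0 on (0, δ]
  have hKδ : ∀ r ∈ Ioc (0:ℝ) δ, K r ≤ 0 := by
    intro r hr
    have := hKanti 0 δ le_rfl (fun s hs => hv'small s ⟨hs.1, hs.2.le⟩)
      ⟨le_rfl, hδpos.le⟩ ⟨hr.1.le, hr.2⟩ hr.1.le
    rwa [hK0] at this
  -- main claim : K ≤ 0 everywhere on (0, ∞)
  have hKle : ∀ r : ℝ, 0 < r → K r ≤ 0 := by
    intro r₁ hr₁
    by_contra hpos
    push_neg at hpos
    have hr₁δ : δ < r₁ := by
      by_contra h
      push_neg at h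
      exact absurd (hKδ r₁ ⟨hr₁, h⟩) (not_le.2 hpos)
    set S : Set ℝ := {r | r ∈ Icc δ r₁ ∧ ∀ s ∈ Icc δ r, K s ≤ 0} with hS
    have hδS : δ ∈ S := by
      refine ⟨⟨le_rfl, hr₁δ.le⟩, fun s hs => ?_⟩
      have : s = δ := le_antisymm hs.2 hs.1
      rw [this]
      exact hKδ δ ⟨hδpos, le_rfl⟩
    have hSne : S.Nonempty := ⟨δ, hδS⟩
    have hSbdd : BddAbove S := ⟨r₁, fun x hx => hx.1.2⟩
    set r₀ := sSup S with hr₀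
    have hr₀ge : δ ≤ r₀ := le_csSup hSbdd hδS
    have hr₀le : r₀ ≤ r₁ := csSup_le hSne (fun x hx => hx.1.2)
    have hr₀pos : 0 < r₀ := lt_of_lt_of_le hδpos hr₀ge
    have hKlt : ∀ s, δ ≤ s → s < r₀ → K s ≤ 0 := by
      intro s hs1 hs2
      obtain ⟨x, hxS, hsx⟩ := exists_lt_of_lt_csSup hSne hs2
      exact hxS.2 s ⟨hs1, hsx.le⟩
    have hKr₀ : K r₀ ≤ 0 := by
      rcases eq_or_lt_of_le hr₀ge with h | h
      · rw [← h]; exact hKδ δ ⟨hδpos, le_rfl⟩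
      · have hcK : ContinuousAt K r₀ := hKcont.continuousAt (Ici_mem_nhds hr₀pos)
        have htd : Tendsto K (𝓝[<] r₀) (𝓝 (K r₀)) :=
          hcK.continuousWithinAt.tendsto
        refine le_of_tendsto htd ?_
        filter_upwards [Ioo_mem_nhdsLT_of_mem (⟨h, le_rfl⟩ : r₀ ∈ Ioc δ r₀)] with s hs
        exact hKlt s hs.1.le hs.2
    have hr₀lt : r₀ < r₁ := by
      rcases eq_or_lt_of_le hr₀le with h | h
      · exact absurd (h ▸ hKr₀) (not_le.2 hpos)
      · exact h
    have hv'r₀ : deriv v r₀ < 0 := hKv r₀ hr₀pos hKr₀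
    have hcV : ContinuousAt (deriv v) r₀ := hv'cont.continuousAt (Ioi_mem_nhds hr₀pos)
    have hevV : ∀ᶠ s in 𝓝[>] r₀, deriv v s < 0 := by
      have h1 : ∀ᶠ s in 𝓝 r₀, deriv v s < 0 := by
        have := hcV.eventually (eventually_lt_nhds hv'r₀ (b := 0))
        simpa using this
      exact h1.filter_mono nhdsWithin_le_nhds
    obtain ⟨u, hu, husub⟩ := mem_nhdsGT_iff_exists_Ioc_subset.1 hevV
    set b := min u r₁ with hb
    have hr₀b : r₀ < b := lt_min hu hr₀lt
    have hKab : AntitoneOn K (Icc r₀ b) := by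
      apply hKanti r₀ b hr₀pos.le
      intro s hs
      exact husub ⟨hs.1, le_trans hs.2.le (min_le_left _ _)⟩
    have hbS : b ∈ S := by
      refine ⟨⟨le_trans hr₀ge hr₀b.le, min_le_right _ _⟩, ?_⟩
      intro s hs
      rcases lt_trichotomy s r₀ with h | h | h
      · exact hKlt s hs.1 h
      · rw [h]; exact hKr₀
      · calc K s ≤ K r₀ := hKab ⟨le_rfl, hr₀b.le⟩ ⟨h.le, hs.2⟩ h.le
             _ ≤ 0 := hKr₀
    exact absurd (le_csSup hSbdd hbS) (not_le.2 hr₀b)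
  -- conclusion
  intro r hr
  have hKr := hKle r hr
  have hv' := hKv r hr hKr
  refine ⟨?_, hv'⟩
  have hvr := hv r hr.le
  have hWr : derivWithin w (Ici 0) r = deriv v r * m * v r ^ (m-1) := by
    rw [hWw r hr, hderivw r hr]
  rw [hkR]
  have hcv : v r ^ (1-m) * v r ^ m = v r := by
    rw [← Real.rpow_add hvr]
    norm_num
  have hcv2 : v r ^ (m-1) * v r = v r ^ m := by
    nth_rewrite 2 [← Real.rpow_one (v r)]
    rw [← Real.rpow_add hvr]
    ring_nf
  have hP : (0:ℝ) < m * v r ^ m * r ^ (k+1) := by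
    have := Real.rpow_pos_of_pos hvr m
    positivity
  have hkey : (α / (((k:ℝ)+3) * (((k:ℝ)+3) - 1)) * (r ^ 2 * v r ^ (1 - m))
      + r * deriv v r / v r) * (m * v r ^ m * r ^ (k+1)) = K r := by
    simp only [hKdef, hWr]
    have hk23 : (((k:ℝ)+3) - 1) = (k:ℝ)+2 := by ring
    rw [hk23, hc]
    field_simp
    linear_combination (α * r^(k+3) * v r) * hcv
      - (((k:ℝ)+3) * ((k:ℝ)+2) * deriv v r * r^(k+2)) * hcv2
  by_contra hcon
  push_neg at hcon
  have h5 : 0 < (α / (((k:ℝ)+3) * (((k:ℝ)+3) - 1)) * (r ^ 2 * v r ^ (1 - m))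
      + r * deriv v r / v r) * (m * v r ^ m * r ^ (k+1)) := mul_pos hcon hP
  rw [hkey] at h5
  linarith
end

section
/- Let n ≥ 3, m = (n-2)/(n+2), β > ρ/(n-2) > 0, α = (2β+ρ)/(1-m), with nβ > α, and let v be a radially symmetric positive solution of ((n-1)/m)Δ(v^m) + αv + βx·∇v = 0 on ℝⁿ such that w(r) = r² v(r)^{1-m} is strictly increasing and bounded below by a positive constant for r > 1. Then limsup_{r→∞} (∫₀^r z^{n-1} v(z) dz)/(r^n v(r)) ≤ (1-m)/(n(1-m)-2). -/
open Real Set Filter intervalIntegral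

/-- Limsup estimate for the ratio of the integral ∫₀^r z^{n-1} v to r^n v(r). -/
theorem stmt_8 (n : ℕ) (m α β ρ : ℝ) (hn : 3 ≤ n)
    (hm : m = ((n : ℝ) - 2) / (n + 2)) (hρ : 0 < ρ / ((n : ℝ) - 2))
    (hβ : β > ρ / ((n : ℝ) - 2)) (hα : α = (2 * β + ρ) / (1 - m))
    (hnβ : (n : ℝ) * β > α)
    (v : ℝ → ℝ) (hv : ∀ r, 0 ≤ r → 0 < v r)
    (hreg : ContDiffOn ℝ 2 v (Set.Ici 0)) (hv'0 : deriv v 0 = 0)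
    (hode : ∀ r, 0 < r →
      ((n : ℝ) - 1) / m *
          (deriv (deriv (fun s => v s ^ m)) r
            + ((n : ℝ) - 1) / r * deriv (fun s => v s ^ m) r)
        + α * v r + β * r * deriv v r = 0)
    (hmono : StrictMonoOn (fun r => r ^ 2 * v r ^ (1 - m)) (Set.Ioi (0 : ℝ)))
    (hbd : ∃ C > (0 : ℝ), ∀ r, 1 < r → C ≤ r ^ 2 * v r ^ (1 - m)) :
    Filter.limsup
        (fun r => (∫ z in (0 : ℝ)..r, z ^ (n - 1) * v z) / (r ^ n * v r)) atTop
      ≤ (1 - m) / ((n : ℝ) * (1 - m) - 2) := by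
  have hn3 : (3:ℝ) ≤ (n:ℝ) := by exact_mod_cast hn
  have hnp2 : (0:ℝ) < (n:ℝ) + 2 := by linarith
  have hμeq : 1 - m = 4 / ((n:ℝ) + 2) := by
    rw [hm]; field_simp; ring
  have hμpos : 0 < 1 - m := by rw [hμeq]; positivity
  have hμne : (1 - m) ≠ 0 := ne_of_gt hμpos
  set p : ℝ := 2 / (1 - m) with hpdef
  have hppos : 0 < p := by positivity
  have hnμ : 0 < (n:ℝ) * (1 - m) - 2 := by
    have h : (n:ℝ) * (1 - m) - 2 = (2 * (n:ℝ) - 4) / ((n:ℝ) + 2) := by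
      rw [hμeq]; field_simp; ring
    rw [h]; apply div_pos (by linarith) hnp2
  have hnp : 0 < (n:ℝ) - p := by
    rw [hpdef, sub_pos, div_lt_iff₀ hμpos]
    nlinarith
  have hexp : (-1:ℝ) < (n:ℝ) - 1 - p := by linarith
  have key : ∀ r : ℝ, 0 < r →
      (∫ z in (0:ℝ)..r, z ^ (n - 1) * v z) / (r ^ n * v r)
        ≤ (1 - m) / ((n:ℝ) * (1 - m) - 2) := by
    intro r hr
    have hvr := hv r hr.le
    have hden : 0 < (r:ℝ) ^ n * v r := by positivity
    rw [div_le_iff₀ hden]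
    have hint1 : IntervalIntegrable (fun z => z ^ (n - 1) * v z) MeasureTheory.volume 0 r := by
      apply ContinuousOn.intervalIntegrable
      apply ContinuousOn.mul (by fun_prop)
      have hsub : Set.uIcc (0:ℝ) r ⊆ Set.Ici 0 := by
        rw [Set.uIcc_of_le hr.le]; exact Set.Icc_subset_Ici_self
      exact (hreg.continuousOn).mono hsub
    have hint2 : IntervalIntegrable (fun z => r ^ p * v r * z ^ ((n:ℝ) - 1 - p))
        MeasureTheory.volume 0 r :=
      (intervalIntegral.intervalIntegrable_rpow' hexp).const_mul _
    have hpt : ∀ z ∈ Set.Icc (0:ℝ) r,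
        z ^ (n - 1) * v z ≤ r ^ p * v r * z ^ ((n:ℝ) - 1 - p) := by
      intro z hz
      rcases eq_or_lt_of_le hz.1 with h0 | h0
      · rw [← h0]
        have h1 : (0:ℝ) ^ (n - 1) = 0 := by apply zero_pow; omega
        rw [h1, zero_mul]
        have h2 : (0:ℝ) ≤ (0:ℝ) ^ ((n:ℝ) - 1 - p) := Real.rpow_nonneg le_rfl _
        positivity
      · have hvz := hv z hz.1
        have hw : z ^ 2 * v z ^ (1 - m) ≤ r ^ 2 * v r ^ (1 - m) :=
          hmono.monotoneOn (Set.mem_Ioi.mpr h0) (Set.mem_Ioi.mpr hr) hz.2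
        have h1 : v z ^ (1 - m) ≤ (r / z) ^ (2:ℝ) * v r ^ (1 - m) := by
          rw [Real.rpow_two, div_pow, div_mul_eq_mul_div, le_div_iff₀ (by positivity)]
          nlinarith [hw]
        have h2 : v z ≤ (r / z) ^ p * v r := by
          have hmono2 := Real.rpow_le_rpow (by positivity) h1
            (le_of_lt (by positivity : (0:ℝ) < 1/(1 - m)))
          rwa [← Real.rpow_mul hvz.le,
            Real.mul_rpow (Real.rpow_nonneg (by positivity) _) (Real.rpow_nonneg hvr.le _),
            ← Real.rpow_mul (by positivity), ← Real.rpow_mul hvr.le,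
            mul_one_div, mul_one_div, div_self hμne, Real.rpow_one, Real.rpow_one, ← hpdef] at hmono2
        calc z ^ (n - 1) * v z ≤ z ^ (n - 1) * ((r / z) ^ p * v r) :=
              mul_le_mul_of_nonneg_left h2 (by positivity)
          _ = r ^ p * v r * z ^ ((n:ℝ) - 1 - p) := by
              have hcast : ((n - 1 : ℕ) : ℝ) = (n:ℝ) - 1 := by
                have h1n : 1 ≤ n := by omega
                push_cast [h1n]; ring
              rw [Real.div_rpow hr.le h0.le, Real.rpow_sub h0,
                ← Real.rpow_natCast z (n - 1), hcast]
              ring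
    have hIle := intervalIntegral.integral_mono_on hr.le hint1 hint2 hpt
    have hIval : (∫ z in (0:ℝ)..r, r ^ p * v r * z ^ ((n:ℝ) - 1 - p))
        = r ^ p * v r * (r ^ ((n:ℝ) - p) / ((n:ℝ) - p)) := by
      rw [intervalIntegral.integral_const_mul, integral_rpow (Or.inl hexp)]
      rw [Real.zero_rpow (by linarith : (n:ℝ) - 1 - p + 1 ≠ 0)]
      ring_nf
    have hrn : r ^ p * r ^ ((n:ℝ) - p) = r ^ n := by
      rw [← Real.rpow_add hr, ← Real.rpow_natCast r n]
      ring_nf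
    have hscal : (1 - m) / ((n:ℝ) * (1 - m) - 2) = 1 / ((n:ℝ) - p) := by
      rw [div_eq_div_iff (ne_of_gt hnμ) (ne_of_gt hnp), hpdef]
      field_simp
    calc (∫ z in (0:ℝ)..r, z ^ (n - 1) * v z)
        ≤ r ^ p * v r * (r ^ ((n:ℝ) - p) / ((n:ℝ) - p)) := hIle.trans_eq hIval
      _ = (r ^ p * r ^ ((n:ℝ) - p)) * v r * (1 / ((n:ℝ) - p)) := by ring
      _ = r ^ n * v r * (1 / ((n:ℝ) - p)) := by rw [hrn]
      _ = (1 - m) / ((n:ℝ) * (1 - m) - 2) * (r ^ n * v r) := by rw [hscal]; ring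
  have hev : ∀ᶠ r in atTop, (fun r => (∫ z in (0:ℝ)..r, z ^ (n - 1) * v z) / (r ^ n * v r)) r
      ≤ (1 - m) / ((n:ℝ) * (1 - m) - 2) := by
    filter_upwards [eventually_gt_atTop (0:ℝ)] with r hr using key r hr
  have hcb : IsCoboundedUnder (· ≤ ·) atTop
      (fun r => (∫ z in (0:ℝ)..r, z ^ (n - 1) * v z) / (r ^ n * v r)) := by
    apply Filter.isCoboundedUnder_le_of_eventually_le atTop (x := 0)
    filter_upwards [eventually_gt_atTop (0:ℝ)] with r hr
    have hvr := hv r hr.le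
    apply div_nonneg _ (by positivity)
    apply intervalIntegral.integral_nonneg hr.le
    intro z hz
    exact mul_nonneg (pow_nonneg hz.1 _) (hv z hz.1).le
  exact Filter.limsup_le_of_le hcb hev
end

section
/- Let n ≥ 3, m = (n-2)/(n+2), β > ρ/(n-2) > 0, α = (2β+ρ)/(1-m), with nβ > α, and let v be a radially symmetric positive solution of ((n-1)/m)Δ(v^m) + αv + βx·∇v = 0 on ℝⁿ such that w(r) = r² v(r)^{1-m} is strictly increasing. Then 0 < r² v(r)^{1-m} ≤ (n-1)(n-2)/ρ for all r > 0. -/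
open Real Set Filter

set_option maxHeartbeats 1000000 in
/-- Upper bound r² v^{1-m} ≤ (n-1)(n-2)/ρ for the shrinking Yamabe soliton. -/
theorem stmt_9 (n : ℕ) (m α β ρ : ℝ) (hn : 3 ≤ n)
    (hm : m = ((n : ℝ) - 2) / (n + 2)) (hρ : 0 < ρ / ((n : ℝ) - 2))
    (hβ : β > ρ / ((n : ℝ) - 2)) (hα : α = (2 * β + ρ) / (1 - m))
    (hnβ : (n : ℝ) * β > α)
    (v : ℝ → ℝ) (hv : ∀ r, 0 ≤ r → 0 < v r)
    (hreg : ContDiffOn ℝ 2 v (Set.Ici 0)) (hv'0 : deriv v 0 = 0)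
    (hode : ∀ r, 0 < r →
      ((n : ℝ) - 1) / m *
          (deriv (deriv (fun s => v s ^ m)) r
            + ((n : ℝ) - 1) / r * deriv (fun s => v s ^ m) r)
        + α * v r + β * r * deriv v r = 0)
    (hmono : StrictMonoOn (fun r => r ^ 2 * v r ^ (1 - m)) (Set.Ioi (0 : ℝ))) :
    ∀ r, 0 < r →
      0 < r ^ 2 * v r ^ (1 - m) ∧
      r ^ 2 * v r ^ (1 - m) ≤ ((n : ℝ) - 1) * ((n : ℝ) - 2) / ρ := by
  set c : ℝ := (n : ℝ) with hc
  have hc3 : (3:ℝ) ≤ c := by rw [hc]; exact_mod_cast hn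
  have hc1 : (0:ℝ) < c - 1 := by linarith
  have hc2 : (0:ℝ) < c - 2 := by linarith
  have hcp2 : (0:ℝ) < c + 2 := by linarith
  have hρ0 : 0 < ρ := by
    have := mul_pos hρ hc2
    rwa [div_mul_cancel₀ _ hc2.ne'] at this
  have hm0 : 0 < m := by rw [hm]; positivity
  have hm1 : m < 1 := by rw [hm, div_lt_one hcp2]; linarith
  have h1m : 0 < 1 - m := by linarith
  have h1mval : 1 - m = 4 / (c + 2) := by rw [hm]; field_simp; ring
  have hK : 0 < c * β - α := by linarith [hnβ]
  have hscal : (c*β - α) * (2/(c-2)) - β = -((c+2)*ρ/(2*(c-2))) := by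
    rw [hα, h1mval]; field_simp; ring
  set q : ℝ := (c+2)/2 with hq
  set p : ℝ := (c-4)/2 with hp
  -- regularity facts
  have hvC : ∀ r : ℝ, 0 < r → ContDiffAt ℝ 2 v r := fun r hr =>
    hreg.contDiffAt (mem_of_superset (Ioi_mem_nhds hr) Ioi_subset_Ici_self)
  have hvd : ∀ r : ℝ, 0 < r → HasDerivAt v (deriv v r) r := fun r hr =>
    ((hvC r hr).differentiableAt (by norm_num)).hasDerivAt
  set u : ℝ → ℝ := fun s => v s ^ m with hu
  have huC : ∀ r : ℝ, 0 < r → ContDiffAt ℝ 2 u r := fun r hr =>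
    (hvC r hr).rpow_const_of_ne (hv r hr.le).ne'
  have huOn : ContDiffOn ℝ 2 u (Ioi 0) := fun x hx => (huC x hx).contDiffWithinAt
  have hdu1 : ContDiffOn ℝ 1 (deriv u) (Ioi 0) :=
    huOn.deriv_of_isOpen isOpen_Ioi (by norm_num)
  have hdud : ∀ r : ℝ, 0 < r → HasDerivAt (deriv u) (deriv (deriv u) r) r := fun r hr =>
    (((hdu1.differentiableOn one_ne_zero).differentiableAt (isOpen_Ioi.mem_nhds hr))).hasDerivAt
  have hud : ∀ r : ℝ, 0 < r → HasDerivAt u (deriv v r * m * v r ^ (m-1)) r := fun r hr =>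
    (hvd r hr).rpow_const (Or.inl (hv r hr.le).ne')
  have hud' : ∀ r : ℝ, 0 < r → deriv u r = deriv v r * m * v r ^ (m-1) := fun r hr =>
    (hud r hr).deriv
  -- the auxiliary function G and its derivative
  set G : ℝ → ℝ := fun s => (c-1)/m * (s ^ (c-1) * deriv u s) + β * (s ^ c * v s) with hG
  have hG' : ∀ s : ℝ, 0 < s → HasDerivAt G ((c*β - α) * (s ^ (c-1) * v s)) s := by
    intro s hs
    have hs0 : s ≠ 0 := hs.ne'
    have h1 : HasDerivAt (fun x : ℝ => x ^ (c-1)) ((c-1) * s ^ (c-1-1)) s :=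
      Real.hasDerivAt_rpow_const (Or.inl hs0)
    have h2 : HasDerivAt (fun x : ℝ => x ^ c) (c * s ^ (c-1)) s :=
      Real.hasDerivAt_rpow_const (Or.inl hs0)
    have h3 := ((h1.mul (hdud s hs)).const_mul ((c-1)/m)).add ((h2.mul (hvd s hs)).const_mul β)
    refine HasDerivAt.congr_deriv h3 ?_; symm
    have key := hode s hs
    have key2 : (c-1)/m * (s * deriv (deriv u) s + (c-1) * deriv u s)
        + α * v s * s + β * s^2 * deriv v s = 0 := by
      field_simp at key ⊢
      linear_combination key
    have e1 : s ^ (c - 1 - 1) * s = s ^ (c - 1) := by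
      rw [← Real.rpow_add_one hs0]; norm_num
    have e2 : s ^ (c - 1) * s = s ^ c := by
      rw [← Real.rpow_add_one hs0]; norm_num
    rw [← e2, ← e1]
    linear_combination (-s ^ (c-1-1)) * key2
  -- monotonicity consequence
  have hmain : ∀ z r : ℝ, 0 < z → z ≤ r → z ^ q * v z ≤ r ^ q * v r := by
    have hsimp : ∀ x y : ℝ, 0 ≤ x → 0 < y → (x^2 * y ^ (1-m)) ^ (1/(1-m)) = x ^ q * y := by
      intro x y hx hy
      rw [Real.mul_rpow (pow_nonneg hx 2) (Real.rpow_nonneg hy.le _), ← Real.rpow_natCast x 2,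
        ← Real.rpow_mul hx, ← Real.rpow_mul hy.le,
        show ((2:ℕ):ℝ) * (1/(1-m)) = q by rw [h1mval, hq]; field_simp; ring,
        show (1-m) * (1/(1-m)) = 1 by field_simp,
        Real.rpow_one]
    intro z r hz hzr
    have hr : 0 < r := lt_of_lt_of_le hz hzr
    have hw : z ^ 2 * v z ^ (1-m) ≤ r ^ 2 * v r ^ (1-m) :=
      hmono.monotoneOn (mem_Ioi.mpr hz) (mem_Ioi.mpr hr) hzr
    have h2 := Real.rpow_le_rpow
      (mul_nonneg (pow_nonneg hz.le 2) (Real.rpow_nonneg (hv z hz.le).le _)) hw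
      (div_nonneg zero_le_one h1m.le)
    rwa [hsimp z (v z) hz.le (hv z hz.le), hsimp r (v r) hr.le (hv r hr.le)] at h2
  -- integral estimate : G r ≤ G ε + Bnd
  have hGle : ∀ r : ℝ, 0 < r → ∀ ε ∈ Set.Ioo 0 r,
      G r ≤ G ε + (c*β - α) * (v r * (r ^ c * (2/(c-2)))) := by
    intro r hr ε hε
    obtain ⟨hε0, hεr⟩ := hε
    have hp1 : p + 1 = (c-2)/2 := by rw [hp]; ring
    have hp1pos : 0 < p + 1 := by rw [hp1]; linarith
    have huIcc : Set.uIcc ε r = Set.Icc ε r := uIcc_of_le hεr.le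
    have hposIcc : ∀ z ∈ Set.Icc ε r, 0 < z := fun z hz => lt_of_lt_of_le hε0 hz.1
    have hrpow : ∀ e : ℝ, ContinuousOn (fun z : ℝ => z ^ e) (Set.Icc ε r) := fun e z hz =>
      (Real.continuousAt_rpow_const z e (Or.inl (hposIcc z hz).ne')).continuousWithinAt
    have hvIcc : ContinuousOn v (Set.Icc ε r) :=
      hreg.continuousOn.mono fun z hz => le_of_lt (hposIcc z hz)
    have hint1 : IntervalIntegrable (fun z => (c*β - α) * (z ^ (c-1) * v z))
        MeasureTheory.volume ε r := by
      apply ContinuousOn.intervalIntegrable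
      rw [huIcc]
      exact continuousOn_const.mul ((hrpow (c-1)).mul hvIcc)
    have hint2 : IntervalIntegrable (fun z => (c*β - α) * (r ^ q * v r) * z ^ p)
        MeasureTheory.volume ε r := by
      apply ContinuousOn.intervalIntegrable
      rw [huIcc]
      exact continuousOn_const.mul (hrpow p)
    have hftc : ∫ z in ε..r, (c*β - α) * (z ^ (c-1) * v z) = G r - G ε :=
      intervalIntegral.integral_eq_sub_of_hasDerivAt
        (fun z hz => hG' z (hposIcc z (huIcc ▸ hz))) hint1
    have hpt : ∀ z ∈ Set.Icc ε r,
        (c*β - α) * (z ^ (c-1) * v z) ≤ (c*β - α) * (r ^ q * v r) * z ^ p := by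
      intro z hz
      have hz0 : 0 < z := hposIcc z hz
      have h1 : z ^ q * v z ≤ r ^ q * v r := hmain z r hz0 hz.2
      have hzc : z ^ (c-1) = z ^ p * z ^ q := by
        rw [← Real.rpow_add hz0]; congr 1; rw [hp, hq]; ring
      calc (c*β - α) * (z ^ (c-1) * v z) = (c*β - α) * ((z ^ q * v z) * z ^ p) := by
            rw [hzc]; ring
        _ ≤ (c*β - α) * ((r ^ q * v r) * z ^ p) := by
            apply mul_le_mul_of_nonneg_left _ hK.le
            exact mul_le_mul_of_nonneg_right h1 (Real.rpow_nonneg hz0.le _)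
        _ = (c*β - α) * (r ^ q * v r) * z ^ p := by ring
    have hmono_int := intervalIntegral.integral_mono_on hεr.le hint1 hint2 hpt
    have heval : ∫ z in ε..r, (c*β - α) * (r ^ q * v r) * z ^ p
        = (c*β - α) * (r ^ q * v r) * ((r ^ (p+1) - ε ^ (p+1)) / (p+1)) := by
      rw [intervalIntegral.integral_const_mul, integral_rpow (Or.inl (by rw [hp]; linarith))]
    have heq : (c*β - α) * (r ^ q * v r) * (r ^ (p+1) / (p+1))
        = (c*β - α) * (v r * (r ^ c * (2/(c-2)))) := by
      rw [show r ^ c = r ^ q * r ^ (p+1) by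
        rw [← Real.rpow_add hr]; congr 1; rw [hp, hq]; ring, hp1]
      field_simp
    have hCpos : 0 < (c*β - α) * (r ^ q * v r) :=
      mul_pos hK (mul_pos (Real.rpow_pos_of_pos hr _) (hv r hr.le))
    have hlast : (c*β - α) * (r ^ q * v r) * ((r ^ (p+1) - ε ^ (p+1)) / (p+1))
        ≤ (c*β - α) * (r ^ q * v r) * (r ^ (p+1) / (p+1)) := by
      apply mul_le_mul_of_nonneg_left _ hCpos.le
      have := Real.rpow_nonneg hε0.le (p+1)
      apply div_le_div_of_nonneg_right ?_ hp1pos.le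
      linarith
    have hb1 : G r - G ε ≤ (c*β - α) * (r ^ q * v r) * ((r ^ (p+1) - ε ^ (p+1)) / (p+1)) := by
      rw [← hftc, ← heval]; exact hmono_int
    have hb2 : (c*β - α) * (r ^ q * v r) * ((r ^ (p+1) - ε ^ (p+1)) / (p+1))
        ≤ (c*β - α) * (v r * (r ^ c * (2/(c-2)))) := by
      rw [← heq]; exact hlast
    linarith
  -- limit of G at 0⁺
  have hG0 : Tendsto G (nhdsWithin 0 (Set.Ioi 0)) (nhds 0) := by
    have hvt : Tendsto v (nhdsWithin 0 (Set.Ioi 0)) (nhds (v 0)) :=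
      ((hreg.continuousOn 0 (mem_Ici.mpr le_rfl)).tendsto).mono_left
        (nhdsWithin_mono _ (Ioi_subset_Ici le_rfl))
    have hdWcont : ContinuousWithinAt (derivWithin v (Set.Ici 0)) (Set.Ici 0) 0 :=
      (hreg.continuousOn_derivWithin (uniqueDiffOn_Ici 0) (by norm_num)) 0 (mem_Ici.mpr le_rfl)
    have hdvt : Tendsto (deriv v) (nhdsWithin 0 (Set.Ioi 0))
        (nhds (derivWithin v (Set.Ici 0) 0)) := by
      apply Tendsto.congr' _
        (hdWcont.tendsto.mono_left (nhdsWithin_mono _ (Ioi_subset_Ici le_rfl)))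
      filter_upwards [self_mem_nhdsWithin] with x hx
      exact derivWithin_of_mem_nhds (mem_of_superset (Ioi_mem_nhds hx) Ioi_subset_Ici_self)
    have hvmt : Tendsto (fun s => v s ^ (m-1)) (nhdsWithin 0 (Set.Ioi 0))
        (nhds (v 0 ^ (m-1))) :=
      ((Real.continuousAt_rpow_const (v 0) (m-1) (Or.inl (hv 0 le_rfl).ne')).tendsto).comp hvt
    have hduT : Tendsto (deriv u) (nhdsWithin 0 (Set.Ioi 0))
        (nhds (derivWithin v (Set.Ici 0) 0 * m * v 0 ^ (m-1))) := by
      apply Tendsto.congr' _ (((hdvt.mul_const m)).mul hvmt)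
      filter_upwards [self_mem_nhdsWithin] with x hx
      exact (hud' x hx).symm
    have hr1 : Tendsto (fun s : ℝ => s ^ (c-1)) (nhdsWithin 0 (Set.Ioi 0)) (nhds 0) := by
      have h := (Real.continuousAt_rpow_const 0 (c-1) (Or.inr (by linarith))).tendsto
      rw [Real.zero_rpow (by linarith : c - 1 ≠ 0)] at h
      exact h.mono_left nhdsWithin_le_nhds
    have hrc : Tendsto (fun s : ℝ => s ^ c) (nhdsWithin 0 (Set.Ioi 0)) (nhds 0) := by
      have h := (Real.continuousAt_rpow_const 0 c (Or.inr (by linarith))).tendsto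
      rw [Real.zero_rpow (by linarith : c ≠ 0)] at h
      exact h.mono_left nhdsWithin_le_nhds
    have hlim := (((hr1.mul hduT).const_mul ((c-1)/m))).add ((hrc.mul hvt).const_mul β)
    have h0 : (c-1)/m * (0 * (derivWithin v (Set.Ici 0) 0 * m * v 0 ^ (m-1))) + β * (0 * v 0)
        = 0 := by ring
    rw [h0] at hlim
    exact hlim
  -- main conclusion
  intro r hr
  have hvr : 0 < v r := hv r hr.le
  refine ⟨mul_pos (pow_pos hr 2) (Real.rpow_pos_of_pos hvr _), ?_⟩
  -- pass to the limit ε → 0⁺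
  have hGr : G r ≤ (c*β - α) * (v r * (r ^ c * (2/(c-2)))) := by
    have hT : Tendsto (fun ε => G ε + (c*β - α) * (v r * (r ^ c * (2/(c-2)))))
        (nhdsWithin 0 (Set.Ioi 0)) (nhds (0 + (c*β - α) * (v r * (r ^ c * (2/(c-2)))))) :=
      hG0.add tendsto_const_nhds
    rw [zero_add] at hT
    refine ge_of_tendsto hT ?_
    filter_upwards [Ioo_mem_nhdsGT_of_mem ⟨le_rfl, hr⟩] with ε hε
    exact hGle r hr ε hε
  -- pointwise derivative bounds
  have hrp : 0 < r ^ (c-1) := Real.rpow_pos_of_pos hr _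
  set κ : ℝ := (c+2)*ρ/(2*(c-1)*(c-2)) with hκdef
  have hκ0 : 0 < κ := by rw [hκdef]; positivity
  have hB : ((c-1)/m * r ^ (c-1)) * deriv u r ≤ -((c+2)*ρ/(2*(c-2))) * (r ^ c * v r) := by
    have h1 : (c*β - α) * (v r * (r ^ c * (2/(c-2)))) - β * (r ^ c * v r)
        = -((c+2)*ρ/(2*(c-2))) * (r ^ c * v r) := by
      rw [show (c*β - α) * (v r * (r ^ c * (2/(c-2)))) - β * (r ^ c * v r)
        = ((c*β - α) * (2/(c-2)) - β) * (r ^ c * v r) from by ring, hscal]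
    have h0 : (c-1)/m * (r ^ (c-1) * deriv u r) + β * (r ^ c * v r)
        ≤ (c*β - α) * (v r * (r ^ c * (2/(c-2)))) := hGr
    nlinarith [h0]
  have hX : 0 < (c-1)/m * r ^ (c-1) := by positivity
  have hrceq : r ^ c = r ^ (c-1) * r := by
    rw [← Real.rpow_add_one hr.ne']; norm_num
  have hA : deriv u r ≤ -(m * κ) * (r * v r) := by
    have hD : deriv u r ≤ (-((c+2)*ρ/(2*(c-2))) * (r ^ c * v r)) / ((c-1)/m * r ^ (c-1)) := by
      rw [le_div_iff₀ hX]; linarith [hB]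
    refine hD.trans_eq ?_
    rw [hrceq, hκdef]
    field_simp
  have hP : 0 < m * v r ^ (m-1) := by positivity
  have hv'le : deriv v r ≤ -κ * (r * v r ^ (2-m)) := by
    have h2 : deriv v r * (m * v r ^ (m-1)) ≤ -(m * κ) * (r * v r) := by
      rw [show deriv v r * (m * v r ^ (m-1)) = deriv v r * m * v r ^ (m-1) from by ring,
        ← hud' r hr]
      exact hA
    have h3 : deriv v r ≤ (-(m * κ) * (r * v r)) / (m * v r ^ (m-1)) :=
      (le_div_iff₀ hP).mpr h2
    refine h3.trans_eq ?_
    have F : v r ^ (2-m) * v r ^ (m-1) = v r := by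
      rw [← Real.rpow_add hvr]; norm_num
    rw [div_eq_iff hP.ne']
    linear_combination (m*κ*r) * F
  -- derivative of w and the slope argument
  have hwd : HasDerivAt (fun s => s ^ 2 * v s ^ (1-m))
      ((2*r) * v r ^ (1-m) + r ^ 2 * (deriv v r * (1-m) * v r ^ (1-m-1))) r := by
    have h1 : HasDerivAt (fun s : ℝ => s ^ 2) (2*r) r := by
      simpa using hasDerivAt_pow 2 r
    exact h1.mul ((hvd r hr).rpow_const (Or.inl hvr.ne'))
  have hslope : 0 ≤ (2*r) * v r ^ (1-m) + r ^ 2 * (deriv v r * (1-m) * v r ^ (1-m-1)) := by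
    have hT : Tendsto (slope (fun s => s ^ 2 * v s ^ (1-m)) r) (nhdsWithin r (Set.Ioi r))
        (nhds ((2*r) * v r ^ (1-m) + r ^ 2 * (deriv v r * (1-m) * v r ^ (1-m-1)))) :=
      ((hasDerivAt_iff_tendsto_slope.mp hwd)).mono_left
        (nhdsWithin_mono _ fun x hx => ne_of_gt hx)
    refine ge_of_tendsto hT ?_
    filter_upwards [self_mem_nhdsWithin] with x hx
    rw [slope_def_field]
    apply div_nonneg _ (by simp [le_of_lt (show r < x from hx)] : (0:ℝ) ≤ x - r)
    have := hmono (mem_Ioi.mpr hr) (mem_Ioi.mpr (hr.trans hx)) hx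
    simp only [sub_nonneg]
    exact le_of_lt this
  -- combine everything
  have VV : v r ^ (1-m-1) * v r ^ (2-m) = v r ^ (1-m) * v r ^ (1-m) := by
    rw [← Real.rpow_add hvr, ← Real.rpow_add hvr]; congr 1; ring
  have h5 : r ^ 2 * ((1-m) * v r ^ (1-m-1)) * deriv v r
      ≤ r ^ 2 * ((1-m) * v r ^ (1-m-1)) * (-κ * (r * v r ^ (2-m))) := by
    apply mul_le_mul_of_nonneg_left hv'le
    positivity
  have h7 : 0 ≤ 2*r*(v r ^ (1-m)) - (1-m)*κ*r^3*(v r ^ (1-m) * v r ^ (1-m)) := by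
    have e : r ^ 2 * ((1-m) * v r ^ (1-m-1)) * (-κ * (r * v r ^ (2-m)))
        = -((1-m)*κ*r^3*(v r ^ (1-m-1) * v r ^ (2-m))) := by ring
    rw [e, VV] at h5
    nlinarith [hslope, h5]
  have hXr : 0 < r * v r ^ (1-m) := by positivity
  have h7' : ((1-m)*κ*(r^2 * v r ^ (1-m))) * (r * v r ^ (1-m)) ≤ 2 * (r * v r ^ (1-m)) := by
    calc ((1-m)*κ*(r^2 * v r ^ (1-m))) * (r * v r ^ (1-m))
        = (1-m)*κ*r^3*(v r ^ (1-m) * v r ^ (1-m)) := by ring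
      _ ≤ 2*r*(v r ^ (1-m)) := by linarith [h7]
      _ = 2 * (r * v r ^ (1-m)) := by ring
  have h8 : (1-m)*κ*(r^2 * v r ^ (1-m)) ≤ 2 := le_of_mul_le_mul_right h7' hXr
  have hκ' : (1-m)*κ*((c-1)*(c-2)) = 2*ρ := by
    rw [hκdef, h1mval]; field_simp; ring
  rw [le_div_iff₀ hρ0]
  have h10 := mul_le_mul_of_nonneg_right h8 (mul_pos hc1 hc2).le
  have h11 : 2*ρ*(r^2 * v r ^ (1-m)) ≤ 2*((c-1)*(c-2)) := by
    calc 2*ρ*(r^2 * v r ^ (1-m)) = ((1-m)*κ*((c-1)*(c-2)))*(r^2 * v r ^ (1-m)) := by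
          rw [hκ']
      _ = ((1-m)*κ*(r^2 * v r ^ (1-m))) * ((c-1)*(c-2)) := by ring
      _ ≤ 2*((c-1)*(c-2)) := h10
  linarith [h11]
end

section
/- Let v be a positive C¹ function on (0,∞) and a₁ > 0 be such that lim_{r→∞} (r² v(r)^{1-m})/(log r) = a₁ for some 0 < m < 1, and suppose lim_{r→∞} r v'(r)/v(r) = a exists. Then a = -2/(1-m). -/
open Real Set Filter

lemma aux_mvt (H g : ℝ → ℝ) (c : ℝ)
    (hd : ∀ t, 1 < t → HasDerivAt H (g t) t)
    (hg : Tendsto g atTop (nhds c))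
    (hH : Tendsto (fun t => H t / t) atTop (nhds 0)) : c = 0 := by
  have key : ∀ ε > (0:ℝ), |c| ≤ ε := by
    intro ε hε
    have hε3 : 0 < ε / 3 := by linarith
    obtain ⟨T₀, hT₀⟩ := Metric.tendsto_atTop.mp hg (ε / 3) hε3
    set T : ℝ := max T₀ 2 with hTdef
    have hT1 : (1:ℝ) < T := lt_of_lt_of_le one_lt_two (le_max_right _ _)
    have hT0 : (0:ℝ) < T := by linarith
    have slope : ∀ t, T < t → |H t - H T - c * (t - T)| ≤ ε / 3 * (t - T) := by
      intro t ht
      have hcont : ContinuousOn H (Icc T t) := by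
        intro x hx
        have hx1 : 1 < x := lt_of_lt_of_le hT1 hx.1
        exact (hd x hx1).continuousAt.continuousWithinAt
      have hderiv : ∀ x ∈ Ioo T t, HasDerivAt H (g x) x := fun x hx =>
        hd x (lt_trans hT1 hx.1)
      obtain ⟨ξ, hξ, hsl⟩ := exists_hasDerivAt_eq_slope H g ht hcont hderiv
      have hξT : T₀ ≤ ξ := le_trans (le_max_left _ _) hξ.1.le
      have hgc : |g ξ - c| < ε / 3 := by
        have := hT₀ ξ hξT
        rwa [Real.dist_eq] at this
      have htT : 0 < t - T := by linarith [ht]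
      have : |(H t - H T) / (t - T) - c| ≤ ε / 3 := by
        rw [← hsl]; exact hgc.le
      have hmul : ((H t - H T) / (t - T) - c) * (t - T) = H t - H T - c * (t - T) := by
        field_simp
      calc |H t - H T - c * (t - T)| = |((H t - H T) / (t - T) - c) * (t - T)| := by
            rw [hmul]
        _ = |(H t - H T) / (t - T) - c| * (t - T) := by rw [abs_mul, abs_of_pos htT]
        _ ≤ ε / 3 * (t - T) := mul_le_mul_of_nonneg_right this htT.le
    -- choose a large t
    have hev1 : ∀ᶠ t in atTop, |H t / t| ≤ ε / 3 := by
      have := Metric.tendsto_atTop.mp hH (ε / 3) hε3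
      obtain ⟨N, hN⟩ := this
      filter_upwards [eventually_ge_atTop N] with t ht
      have := hN t ht
      rw [Real.dist_eq, sub_zero] at this
      exact this.le
    have hev2 : ∀ᶠ t in atTop, (|H T| + |c| * T) / t ≤ ε / 3 := by
      filter_upwards [eventually_ge_atTop (max 1 (3 * (|H T| + |c| * T) / ε))] with t ht
      have ht1 : (1:ℝ) ≤ t := le_trans (le_max_left _ _) ht
      have ht2 : 3 * (|H T| + |c| * T) / ε ≤ t := le_trans (le_max_right _ _) ht
      rw [div_le_iff₀ (by linarith)]
      rw [div_le_iff₀ hε] at ht2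
      linarith
    have hev3 : ∀ᶠ t in atTop, T < t := eventually_gt_atTop T
    obtain ⟨t, h1, h2, h3⟩ := (hev1.and (hev2.and hev3)).exists
    have ht0 : 0 < t := lt_trans hT0 h3
    have htT : 0 < t - T := by linarith
    have hs := slope t h3
    -- |c - H t / t| ≤ ε/3 + (|H T| + |c| T)/t
    have e1 : |c * t - H t| ≤ ε / 3 * t + (|H T| + |c| * T) := by
      have : c * t - H t = -(H t - H T - c * (t - T)) - H T + c * T := by ring
      rw [this]
      calc |-(H t - H T - c * (t - T)) - H T + c * T|
          ≤ |H t - H T - c * (t - T)| + |H T| + |c * T| := by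
            have := abs_add_le (-(H t - H T - c * (t - T)) - H T) (c * T)
            have h2' := abs_sub (-(H t - H T - c * (t - T))) (H T)
            rw [abs_neg] at h2'
            calc |-(H t - H T - c * (t - T)) - H T + c * T|
                ≤ |-(H t - H T - c * (t - T)) - H T| + |c * T| := abs_add_le _ _
              _ ≤ |H t - H T - c * (t - T)| + |H T| + |c * T| := by
                  have : |-(H t - H T - c * (t - T)) - H T| ≤ |H t - H T - c * (t - T)| + |H T| := by
                    calc |-(H t - H T - c * (t - T)) - H T|
                        ≤ |-(H t - H T - c * (t - T))| + |H T| := abs_sub _ _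
                      _ = |H t - H T - c * (t - T)| + |H T| := by rw [abs_neg]
                  linarith
        _ ≤ ε / 3 * (t - T) + |H T| + |c| * |T| := by
            rw [abs_mul]; linarith
        _ ≤ ε / 3 * t + (|H T| + |c| * T) := by
            rw [abs_of_pos hT0]
            nlinarith
    have e2 : |c - H t / t| ≤ ε / 3 + ε / 3 := by
      have hmul2 : (c - H t / t) * t = c * t - H t := by field_simp
      have habs2 : |c - H t / t| = |c * t - H t| / t := by
        rw [← hmul2, abs_mul, abs_of_pos ht0, mul_div_cancel_right₀ _ ht0.ne']
      rw [habs2]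
      rw [div_le_iff₀ ht0]
      have := mul_le_mul_of_nonneg_right h2 ht0.le
      rw [div_mul_cancel₀ _ ht0.ne'] at this
      linarith
    calc |c| ≤ |c - H t / t| + |H t / t| := by
          have := abs_add_le (c - H t / t) (H t / t)
          simpa using this
      _ ≤ ε / 3 + ε / 3 + ε / 3 := by linarith
      _ = ε := by ring
  have : |c| ≤ 0 := by
    refine le_of_forall_pos_le_add fun ε hε => ?_
    simpa using key ε hε
  exact abs_eq_zero.mp (le_antisymm this (abs_nonneg c))

/-- If r² v^{1-m} / log r → a₁ > 0 and r v'/v → a, then a = -2/(1-m). -/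
theorem stmt_12 (m a₁ a : ℝ) (hm0 : 0 < m) (hm1 : m < 1) (ha₁ : 0 < a₁)
    (v : ℝ → ℝ) (hv : ∀ r, 0 < r → 0 < v r)
    (hreg : ContDiffOn ℝ 1 v (Set.Ioi 0))
    (hlim : Filter.Tendsto (fun r => r ^ 2 * v r ^ (1 - m) / Real.log r) atTop (nhds a₁))
    (ha : Filter.Tendsto (fun r => r * deriv v r / v r) atTop (nhds a)) :
    a = -2 / (1 - m) := by
  have hm : (0:ℝ) < 1 - m := by linarith
  have hdv : ∀ r : ℝ, 0 < r → HasDerivAt v (deriv v r) r := by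
    intro r hr
    have : DifferentiableAt ℝ v r :=
      ((hreg.differentiableOn one_ne_zero).differentiableAt (isOpen_Ioi.mem_nhds hr))
    exact this.hasDerivAt
  set H : ℝ → ℝ := fun t => 2 * t + (1 - m) * Real.log (v (Real.exp t)) with hHdef
  set g : ℝ → ℝ := fun t =>
    2 + (1 - m) * (deriv v (Real.exp t) * Real.exp t / v (Real.exp t)) with hgdef
  have hd : ∀ t : ℝ, 1 < t → HasDerivAt H (g t) t := by
    intro t _
    have h1 : HasDerivAt (fun t => v (Real.exp t)) (deriv v (Real.exp t) * Real.exp t) t :=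
      (hdv _ (Real.exp_pos t)).comp t (Real.hasDerivAt_exp t)
    have h2 : HasDerivAt (fun t => Real.log (v (Real.exp t)))
        (deriv v (Real.exp t) * Real.exp t / v (Real.exp t)) t :=
      h1.log (hv _ (Real.exp_pos t)).ne'
    have h3 := (h2.const_mul (1 - m)).const_add (2 * t) -- wrong: need derivative of 2*t
    -- build directly
    have h4 : HasDerivAt (fun t : ℝ => 2 * t) 2 t := by
      simpa using (hasDerivAt_id t).const_mul (2:ℝ)
    exact h4.add (h2.const_mul (1 - m))
  have hc : Tendsto g atTop (nhds (2 + (1 - m) * a)) := by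
    have h1 : Tendsto (fun t => Real.exp t * deriv v (Real.exp t) / v (Real.exp t))
        atTop (nhds a) := ha.comp Real.tendsto_exp_atTop
    have h2 : Tendsto (fun t => deriv v (Real.exp t) * Real.exp t / v (Real.exp t))
        atTop (nhds a) := by
      refine h1.congr fun t => ?_
      rw [mul_comm]
    exact (h2.const_mul (1 - m)).const_add 2
  have hH : Tendsto (fun t => H t / t) atTop (nhds 0) := by
    have hlogF : Tendsto (fun r => Real.log (r ^ 2 * v r ^ (1 - m) / Real.log r))
        atTop (nhds (Real.log a₁)) :=
      ((Real.continuousAt_log ha₁.ne').tendsto.comp hlim)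
    have hlogFt : Tendsto (fun t => Real.log
        ((Real.exp t) ^ 2 * v (Real.exp t) ^ (1 - m) / Real.log (Real.exp t)))
        atTop (nhds (Real.log a₁)) := hlogF.comp Real.tendsto_exp_atTop
    have heq : ∀ᶠ t in atTop, H t / t =
        Real.log ((Real.exp t) ^ 2 * v (Real.exp t) ^ (1 - m) / Real.log (Real.exp t)) / t
          + Real.log t / t := by
      filter_upwards [eventually_gt_atTop (0:ℝ)] with t ht
      have hvp : 0 < v (Real.exp t) := hv _ (Real.exp_pos t)
      have hlr : Real.log (Real.exp t) = t := Real.log_exp t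
      have hnum : Real.log ((Real.exp t) ^ 2 * v (Real.exp t) ^ (1 - m) / Real.log (Real.exp t))
          = 2 * t + (1 - m) * Real.log (v (Real.exp t)) - Real.log t := by
        rw [hlr]
        rw [Real.log_div (by positivity) ht.ne']
        rw [Real.log_mul (by positivity) (by positivity)]
        rw [Real.log_pow, Real.log_rpow hvp, Real.log_exp]
        push_cast
        ring
      rw [hnum, hHdef]
      field_simp
      ring
    rw [show (0:ℝ) = 0 + 0 by ring]
    have heq' : (fun t => H t / t) =ᶠ[atTop] (fun t =>
        Real.log ((Real.exp t) ^ 2 * v (Real.exp t) ^ (1 - m) / Real.log (Real.exp t)) / t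
          + Real.log t / t) := heq
    exact Tendsto.congr' heq'.symm
      ((hlogFt.div_atTop tendsto_id).add
        Real.isLittleO_log_id_atTop.tendsto_div_nhds_zero)
  have hczero : 2 + (1 - m) * a = 0 := aux_mvt H g _ hd hc hH
  field_simp
  linarith
end

section
/- Let n ≥ 3, β > 0, ρ ∈ ℝ, and suppose R : [0,∞) → ℝ is a C² function and v a positive continuous function on [0,∞) satisfying R''(r) + ((n-1)/r)R'(r) + (β/(n-1)) v(r)^{1-m} r R'(r) = -(1/(n-1)) v(r)^{1-m} R(r)(R(r)-ρ) for all r > 0, with R' bounded near 0. If R(r)(R(r)-ρ) > 0 for all r ≥ 0, then R'(r) < 0 for all r > 0. -/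
open Real Set Filter

/-- Monotonicity of the scalar curvature: R'(r) < 0 for all r > 0. -/
theorem stmt_14 (n : ℕ) (m β ρ : ℝ) (hn : 3 ≤ n) (hβ : 0 < β)
    (R v : ℝ → ℝ)
    (hR : ContDiffOn ℝ 2 R (Set.Ici 0))
    (hv : ∀ r, 0 ≤ r → 0 < v r) (hvc : ContinuousOn v (Set.Ici 0))
    (hode : ∀ r, 0 < r →
      deriv (deriv R) r + ((n : ℝ) - 1) / r * deriv R r
          + β / ((n : ℝ) - 1) * v r ^ (1 - m) * r * deriv R r
        = -(1 / ((n : ℝ) - 1)) * v r ^ (1 - m) * R r * (R r - ρ))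
    (hR'bd : ∃ C : ℝ, ∃ δ > (0 : ℝ), ∀ r, 0 < r → r < δ → |deriv R r| ≤ C)
    (hpos : ∀ r, 0 ≤ r → 0 < R r * (R r - ρ)) :
    ∀ r, 0 < r → deriv R r < 0 := by
  have hn1 : (0:ℝ) < (n:ℝ) - 1 := by
    have : (3:ℝ) ≤ (n:ℝ) := by exact_mod_cast hn
    linarith
  -- integrand of the integrating factor
  set f : ℝ → ℝ := fun s => s * v s ^ (1 - m) with hf
  have hfc : ContinuousOn f (Set.Ici 0) := by
    exact continuousOn_id.mul (hvc.rpow_const (fun x hx => Or.inl (hv x hx).ne'))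
  have hfnonneg : ∀ s ∈ Set.Ici (0:ℝ), 0 ≤ f s := fun s hs =>
    mul_nonneg hs (Real.rpow_nonneg (hv s hs).le _)
  have hfint : ∀ x : ℝ, 0 ≤ x → IntervalIntegrable f MeasureTheory.volume 0 x := by
    intro x hx
    apply ContinuousOn.intervalIntegrable
    apply hfc.mono
    rw [Set.uIcc_of_le hx]
    exact fun s hs => hs.1
  -- the exponent
  set g : ℝ → ℝ := fun t => β / ((n:ℝ) - 1) * ∫ s in (0:ℝ)..t, f s with hg
  have hgderiv : ∀ x : ℝ, 0 < x → HasDerivAt g (β / ((n:ℝ) - 1) * f x) x := by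
    intro x hx
    have h1 : HasDerivAt (fun t => ∫ s in (0:ℝ)..t, f s) (f x) x := by
      apply intervalIntegral.integral_hasDerivAt_right (hfint x hx.le)
      · exact AEStronglyMeasurable.stronglyMeasurableAtFilter_of_mem
          (hfc.aestronglyMeasurable measurableSet_Ici) (Ici_mem_nhds hx)
      · exact hfc.continuousAt (Ici_mem_nhds hx)
    simpa using h1.const_mul (β / ((n:ℝ) - 1))
  -- monotone bound on g near 0
  have hgmono : ∀ t : ℝ, 0 ≤ t → t ≤ 1 → g t ≤ g 1 := by
    intro t ht ht1
    apply mul_le_mul_of_nonneg_left _ (by positivity)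
    apply intervalIntegral.integral_mono_interval le_rfl ht ht1 _ (hfint 1 zero_le_one)
    filter_upwards [MeasureTheory.ae_restrict_mem measurableSet_Ioc] with s hs
    exact hfnonneg s (le_of_lt hs.1)
  -- second derivative data
  have hR' : ∀ x : ℝ, 0 < x → HasDerivAt (deriv R) (deriv (deriv R) x) x := by
    intro x hx
    have hca : ContDiffAt ℝ 2 R x := hR.contDiffAt (Ici_mem_nhds hx)
    have h2 : ContDiffAt ℝ 1 (fderiv ℝ R) x := hca.fderiv_right (by norm_num)
    have h3 : DifferentiableAt ℝ (fun y => fderiv ℝ R y 1) x :=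
      (h2.differentiableAt one_ne_zero).clm_apply (differentiableAt_const _)
    have h4 : DifferentiableAt ℝ (deriv R) x := by
      have : (deriv R) = fun y => fderiv ℝ R y 1 := by
        funext y; rw [← fderiv_apply_one_eq_deriv]
      rw [this]; exact h3
    exact h4.hasDerivAt
  -- the weighted derivative W
  set W : ℝ → ℝ := fun t => t ^ (n - 1) * Real.exp (g t) * deriv R t with hW
  have hWderiv : ∀ x : ℝ, 0 < x →
      HasDerivAt W (x ^ (n-1) * Real.exp (g x) *
        (-(1 / ((n : ℝ) - 1)) * v x ^ (1 - m) * R x * (R x - ρ))) x := by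
    intro x hx
    have hgd := hgderiv x hx
    have hexp : HasDerivAt (fun t => Real.exp (g t))
        (Real.exp (g x) * (β / ((n:ℝ) - 1) * f x)) x := by
      simpa [mul_comm] using hgd.exp
    have hpow : HasDerivAt (fun t : ℝ => t ^ (n-1)) ((n-1 : ℕ) * x ^ (n-1-1)) x :=
      hasDerivAt_pow (n-1) x
    have hprod := (hpow.mul hexp).mul (hR' x hx)
    convert hprod using 1
    rotate_left 3
    have hode' := hode x hx
    have hxne : x ≠ 0 := hx.ne'
    have hn2 : 2 ≤ n - 1 := by omega
    have hpowsplit : x ^ (n - 1) = x ^ (n - 1 - 1) * x := by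
      rw [← pow_succ]
      congr 1
      omega
    have hcast : ((n - 1 : ℕ) : ℝ) = (n : ℝ) - 1 := by
      have : 1 ≤ n := by omega
      push_cast [this]; ring
    -- reduce to the ODE
    have key : x ^ (n-1) * Real.exp (g x) *
        (-(1 / ((n : ℝ) - 1)) * v x ^ (1 - m) * R x * (R x - ρ))
        = x ^ (n-1) * Real.exp (g x) *
          (deriv (deriv R) x + ((n : ℝ) - 1) / x * deriv R x
            + β / ((n : ℝ) - 1) * v x ^ (1 - m) * x * deriv R x) := by
      rw [hode']
    rw [key, hpowsplit, hcast]
    simp only [hf, Pi.mul_apply, hpowsplit]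
    field_simp
    ring
    all_goals rfl
  have hWcont : ContinuousOn W (Set.Ioi 0) := fun x hx =>
    ((hWderiv x hx).continuousAt).continuousWithinAt
  have hWanti : StrictAntiOn W (Set.Ioi 0) := by
    apply strictAntiOn_of_deriv_neg (convex_Ioi 0) hWcont
    intro x hx
    rw [interior_Ioi] at hx
    rw [(hWderiv x hx).deriv]
    have hvp : 0 < v x ^ (1 - m) := Real.rpow_pos_of_pos (hv x hx.le) _
    have hRp := hpos x hx.le
    have h1 : 0 < (1 / ((n : ℝ) - 1)) * (v x ^ (1 - m)) * (R x * (R x - ρ)) :=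
      mul_pos (mul_pos (one_div_pos.2 hn1) hvp) hRp
    have h2 : -(1 / ((n : ℝ) - 1)) * v x ^ (1 - m) * R x * (R x - ρ) < 0 := by nlinarith
    have h3 : 0 < x ^ (n-1) * Real.exp (g x) :=
      mul_pos (pow_pos (Set.mem_Ioi.1 hx) _) (Real.exp_pos _)
    exact mul_neg_of_pos_of_neg h3 h2
  -- W tends to 0 at 0⁺
  obtain ⟨C, δ, hδ, hC⟩ := hR'bd
  have hWlim : Tendsto W (nhdsWithin 0 (Set.Ioi 0)) (nhds 0) := by
    set K : ℝ := (max C 0) * Real.exp (g 1) with hK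
    have hbound : ∀ᶠ t in nhdsWithin 0 (Set.Ioi 0), ‖W t‖ ≤ K * t := by
      have hmem : Set.Ioo (0:ℝ) (min δ 1) ∈ nhdsWithin 0 (Set.Ioi 0) := by
        apply Ioo_mem_nhdsGT_of_mem
        constructor
        · exact le_rfl
        · exact lt_min hδ one_pos
      filter_upwards [hmem] with t ht
      obtain ⟨ht0, htm⟩ := ht
      have ht1 : t ≤ 1 := le_of_lt (lt_of_lt_of_le htm (min_le_right _ _))
      have htδ : t < δ := lt_of_lt_of_le htm (min_le_left _ _)
      have h1 : |deriv R t| ≤ max C 0 := le_trans (hC t ht0 htδ) (le_max_left _ _)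
      have h2 : Real.exp (g t) ≤ Real.exp (g 1) := Real.exp_le_exp.2 (hgmono t ht0.le ht1)
      have h3 : t ^ (n-1) ≤ t := by
        calc t ^ (n-1) ≤ t ^ 1 := pow_le_pow_of_le_one ht0.le ht1 (by omega)
        _ = t := pow_one t
      have h4 : |W t| = t ^ (n-1) * Real.exp (g t) * |deriv R t| := by
        rw [hW]
        rw [abs_mul, abs_mul]
        rw [abs_of_nonneg (pow_nonneg ht0.le _), abs_of_nonneg (Real.exp_pos _).le]
      rw [Real.norm_eq_abs, h4]
      calc t ^ (n-1) * Real.exp (g t) * |deriv R t|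
          ≤ t * Real.exp (g 1) * (max C 0) := by
            apply mul_le_mul _ h1 (abs_nonneg _) (by positivity)
            exact mul_le_mul h3 h2 (Real.exp_pos _).le ht0.le
        _ = K * t := by ring
    have hlim2 : Tendsto (fun t => K * t) (nhdsWithin 0 (Set.Ioi 0)) (nhds 0) := by
      have : Tendsto (fun t : ℝ => K * t) (nhds 0) (nhds (K * 0)) :=
        (continuous_const.mul continuous_id).tendsto 0
      rw [mul_zero] at this
      exact this.mono_left nhdsWithin_le_nhds
    exact squeeze_zero_norm' hbound hlim2
  -- conclude: W < 0 on (0,∞)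
  have hWneg : ∀ r : ℝ, 0 < r → W r < 0 := by
    have hWle : ∀ r : ℝ, 0 < r → W r ≤ 0 := by
      intro r hr
      have hev : ∀ᶠ t in nhdsWithin 0 (Set.Ioi 0), W r ≤ W t := by
        filter_upwards [Ioo_mem_nhdsGT_of_mem (Set.left_mem_Ico.2 hr)] with t ht
        exact le_of_lt (hWanti ht.1 hr ht.2)
      exact ge_of_tendsto hWlim hev
    intro r hr
    have h1 : W r < W (r/2) := hWanti (Set.mem_Ioi.2 (by linarith)) (Set.mem_Ioi.2 hr) (by linarith)
    have h2 : W (r/2) ≤ 0 := hWle _ (by linarith)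
    linarith
  intro r hr
  have hWr := hWneg r hr
  have hpos' : 0 < r ^ (n-1) * Real.exp (g r) :=
    mul_pos (pow_pos hr _) (Real.exp_pos _)
  by_contra h
  push_neg at h
  have : 0 ≤ W r := by
    rw [hW]
    exact mul_nonneg hpos'.le h
  linarith
end

section
/- Let n ≥ 3, m = (n-2)/(n+2), β > 0, α = (2β+ρ)/(1-m) > 0, and let v be a radially symmetric positive solution of ((n-1)/m)Δ(v^m) + αv + βx·∇v = 0 on ℝⁿ with scalar curvature R(r) = ρ + 2β(1 + ((1-m)/2) r v'(r)/v(r)) satisfying R(0)(R(0)-ρ) > 0. Define K₀(r) = -R'(r)/(2β r v(r)^{1-m}) for r > 0. Then lim_{r→0} K₀(r) = R(0)(R(0)-ρ)/(2βn(n-1)) = (2β+ρ)/(n(n-1)). -/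
open Real Set Filter

open Topology

set_option maxHeartbeats 2000000 in
/-- The sectional curvature K₀ of planes perpendicular to the spheres tends to
(2β+ρ)/(n(n-1)) at the origin. -/
theorem stmt_15 (n : ℕ) (m α β ρ : ℝ) (hn : 3 ≤ n)
    (hm : m = ((n : ℝ) - 2) / (n + 2)) (hβ : 0 < β)
    (hα : α = (2 * β + ρ) / (1 - m)) (hαpos : 0 < α)
    (v R : ℝ → ℝ) (hv : ∀ r, 0 ≤ r → 0 < v r)
    (hreg : ContDiffOn ℝ 2 v (Set.Ici 0)) (hv'0 : deriv v 0 = 0)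
    (hode : ∀ r, 0 < r →
      ((n : ℝ) - 1) / m *
          (deriv (deriv (fun s => v s ^ m)) r
            + ((n : ℝ) - 1) / r * deriv (fun s => v s ^ m) r)
        + α * v r + β * r * deriv v r = 0)
    (hRdef : ∀ r, 0 ≤ r →
      R r = ρ + 2 * β * (1 + (1 - m) / 2 * (r * deriv v r / v r)))
    (hRpos : 0 < R 0 * (R 0 - ρ))
    (K₀ : ℝ → ℝ)
    (hK₀ : ∀ r, 0 < r → K₀ r = -(deriv R r) / (2 * β * r * v r ^ (1 - m))) :
    Filter.Tendsto K₀ (nhdsWithin 0 (Set.Ioi 0))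
        (nhds (R 0 * (R 0 - ρ) / (2 * β * n * ((n : ℝ) - 1)))) ∧
    R 0 * (R 0 - ρ) / (2 * β * n * ((n : ℝ) - 1)) = (2 * β + ρ) / ((n : ℝ) * (n - 1)) := by
  have hn3 : (3:ℝ) ≤ (n:ℝ) := by exact_mod_cast hn
  have hn1 : (0:ℝ) < (n:ℝ) - 1 := by linarith
  have hn0 : (0:ℝ) < (n:ℝ) := by linarith
  have hm0 : 0 < m := by rw [hm]; apply div_pos <;> linarith
  have h1m : 0 < 1 - m := by
    rw [hm, sub_pos, div_lt_one (by linarith)]; linarith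
  have hv0 : 0 < v 0 := hv 0 le_rfl
  set g := derivWithin v (Ici (0:ℝ)) with hgdef
  set h := derivWithin g (Ici (0:ℝ)) with hhdef
  have hUD := uniqueDiffOn_Ici (0:ℝ)
  have hg_cd : ContDiffOn ℝ 1 g (Ici 0) := hreg.derivWithin hUD (by norm_num)
  have hg_cont : ContinuousOn g (Ici 0) := hg_cd.continuousOn
  have hh_cont : ContinuousOn h (Ici 0) := hg_cd.continuousOn_derivWithin hUD le_rfl
  have hmem : ∀ r : ℝ, 0 < r → Ici (0:ℝ) ∈ 𝓝 r := fun r hr => Ici_mem_nhds hr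
  have hdv : ∀ r : ℝ, 0 < r → HasDerivAt v (g r) r := by
    intro r hr
    have h1 : DifferentiableAt ℝ v r :=
      (hreg.contDiffAt (hmem r hr)).differentiableAt (by norm_num)
    have h2 := h1.hasDerivAt
    rwa [hgdef, derivWithin_of_mem_nhds (hmem r hr)]
  have hdg : ∀ r : ℝ, 0 < r → HasDerivAt g (h r) r := by
    intro r hr
    have h1 : DifferentiableAt ℝ g r :=
      (hg_cd.contDiffAt (hmem r hr)).differentiableAt (by norm_num)
    have h2 := h1.hasDerivAt
    rwa [hhdef, derivWithin_of_mem_nhds (hmem r hr)]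
  clear_value g h
  have hvne : ∀ r : ℝ, 0 ≤ r → v r ≠ 0 := fun r hr => (hv r hr).ne'
  have hdu : ∀ r : ℝ, 0 < r →
      deriv (fun s => v s ^ m) r = g r * m * v r ^ (m - 1) := fun r hr =>
    ((hdv r hr).rpow_const (Or.inl (hvne r hr.le))).deriv
  have hdu2 : ∀ r : ℝ, 0 < r →
      deriv (deriv (fun s => v s ^ m)) r
        = h r * m * v r ^ (m - 1) + g r * m * (g r * (m - 1) * v r ^ (m - 1 - 1)) := by
    intro r hr
    have he : (fun s => g s * m * v s ^ (m - 1)) =ᶠ[𝓝 r] deriv (fun s => v s ^ m) := by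
      filter_upwards [Ioi_mem_nhds hr] with s hs using (hdu s hs).symm
    rw [← he.deriv_eq]
    have hd : HasDerivAt (fun s => g s * m * v s ^ (m - 1))
        (h r * m * v r ^ (m - 1) + g r * m * (g r * (m - 1) * v r ^ (m - 1 - 1))) r :=
      ((hdg r hr).mul_const m).mul ((hdv r hr).rpow_const (Or.inl (hvne r hr.le)))
    exact hd.deriv
  -- exponent conversions
  have e1 : ∀ r : ℝ, 0 < r → v r ^ (m - 1) = v r ^ m / v r := by
    intro r hr
    rw [Real.rpow_sub (hv r hr.le), Real.rpow_one]
  have e2 : ∀ r : ℝ, 0 < r → v r ^ (m - 1 - 1) = v r ^ m / (v r) ^ 2 := by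
    intro r hr
    rw [show m - 1 - 1 = m - 2 by ring, Real.rpow_sub (hv r hr.le),
      show (2:ℝ) = ((2:ℕ):ℝ) by norm_num, Real.rpow_natCast]
  have e3 : ∀ r : ℝ, 0 < r → v r ^ (1 - m) = v r / v r ^ m := by
    intro r hr
    rw [Real.rpow_sub (hv r hr.le), Real.rpow_one]
  have hPpos : ∀ r : ℝ, 0 ≤ r → 0 < v r ^ m := fun r hr => rpow_pos_of_pos (hv r hr) m
  -- the ODE expressed in terms of g, h, and v^m
  have hE : ∀ r : ℝ, 0 < r →
      ((n:ℝ) - 1) * (h r * (v r ^ m / v r)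
          + g r * g r * (m - 1) * (v r ^ m / (v r) ^ 2))
        + ((n:ℝ) - 1) ^ 2 * g r * (v r ^ m / v r) / r
        + α * v r + β * r * g r = 0 := by
    intro r hr
    have H0 := hode r hr
    rw [hdu r hr, hdu2 r hr, (hdv r hr).deriv, e1 r hr, e2 r hr] at H0
    have hvr := hvne r hr.le
    have hPr := (hPpos r hr.le).ne'
    have H1 : m * (((n:ℝ) - 1) * (h r * (v r ^ m / v r)
          + g r * g r * (m - 1) * (v r ^ m / (v r) ^ 2))
        + ((n:ℝ) - 1) ^ 2 * g r * (v r ^ m / v r) / r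
        + α * v r + β * r * g r) = m * 0 := by
      rw [mul_zero]
      field_simp [hm0.ne', hr.ne'] at H0 ⊢
      linear_combination m * H0
    exact mul_left_cancel₀ hm0.ne' H1
  -- solve the ODE for h r
  have hH : ∀ r : ℝ, 0 < r →
      h r = -(((n:ℝ) - 1) * (g r * g r * (m - 1) * (v r ^ m / (v r) ^ 2))
          + ((n:ℝ) - 1) ^ 2 * g r * (v r ^ m / v r) / r
          + α * v r + β * r * g r) / (((n:ℝ) - 1) * (v r ^ m / v r)) := by
    intro r hr
    have ha : ((n:ℝ) - 1) * (v r ^ m / v r) ≠ 0 := by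
      have := hPpos r hr.le
      have := hv r hr.le
      positivity
    rw [eq_div_iff ha]
    linear_combination hE r hr
  -- limits along 𝓝[>] 0
  set l : Filter ℝ := 𝓝[>] (0:ℝ) with hldef
  have hmono : l ≤ 𝓝[Ici (0:ℝ)] 0 := nhdsWithin_mono 0 Ioi_subset_Ici_self
  have hvT : Tendsto v l (𝓝 (v 0)) := (hreg.continuousOn 0 self_mem_Ici).mono_left hmono
  have hgT : Tendsto g l (𝓝 (g 0)) := (hg_cont 0 self_mem_Ici).mono_left hmono
  have hhT : Tendsto h l (𝓝 (h 0)) := (hh_cont 0 self_mem_Ici).mono_left hmono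
  have hrT : Tendsto (fun r : ℝ => r) l (𝓝 0) := tendsto_id.mono_left nhdsWithin_le_nhds
  -- slope of g at 0
  have hslope : Tendsto (fun r => (g r - g 0) / r) l (𝓝 (h 0)) := by
    have hdg0 : HasDerivWithinAt g (h 0) (Ici 0) 0 := by
      rw [hhdef]
      exact ((hg_cd.differentiableOn one_ne_zero) 0 self_mem_Ici).hasDerivWithinAt
    rw [hasDerivWithinAt_iff_tendsto_slope] at hdg0
    have hsub : Ioi (0:ℝ) ⊆ Ici (0:ℝ) \ {0} := fun x (hx : (0:ℝ) < x) => ⟨Set.mem_Ici.mpr hx.le, ne_of_gt hx⟩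
    have := hdg0.mono_left (nhdsWithin_mono 0 hsub)
    refine this.congr' ?_
    filter_upwards [self_mem_nhdsWithin] with x (hx : 0 < x)
    rw [slope_def_field, sub_zero]
  -- limit of g r / r via the ODE
  have hPT : Tendsto (fun r => v r ^ m) l (𝓝 (v 0 ^ m)) := hvT.rpow_const (Or.inl hv0.ne')
  have hq0 : (0:ℝ) < v 0 ^ m := rpow_pos_of_pos hv0 m
  have hFT : Tendsto (fun r => -(((n:ℝ) - 1) * (g r * g r * (m - 1) * (v r ^ m / (v r) ^ 2))
        + α * v r + β * r * g r + ((n:ℝ) - 1) * (h r * (v r ^ m / v r)))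
        / (((n:ℝ) - 1) ^ 2 * (v r ^ m / v r)))
      l (𝓝 (-(((n:ℝ) - 1) * (g 0 * g 0 * (m - 1) * (v 0 ^ m / (v 0) ^ 2))
        + α * v 0 + β * 0 * g 0 + ((n:ℝ) - 1) * (h 0 * (v 0 ^ m / v 0)))
        / (((n:ℝ) - 1) ^ 2 * (v 0 ^ m / v 0)))) := by
    apply Tendsto.div
    · exact (((tendsto_const_nhds.mul (((hgT.mul hgT).mul_const (m-1)).mul
        (hPT.div (hvT.pow 2) (by positivity)))).add
        (tendsto_const_nhds.mul hvT)).add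
        ((tendsto_const_nhds.mul hrT).mul hgT)).add
        (tendsto_const_nhds.mul (hhT.mul (hPT.div hvT hv0.ne'))) |>.neg
    · exact tendsto_const_nhds.mul (hPT.div hvT hv0.ne')
    · positivity
  have hGreq : ∀ᶠ r in l, -(((n:ℝ) - 1) * (g r * g r * (m - 1) * (v r ^ m / (v r) ^ 2))
        + α * v r + β * r * g r + ((n:ℝ) - 1) * (h r * (v r ^ m / v r)))
        / (((n:ℝ) - 1) ^ 2 * (v r ^ m / v r)) = g r / r := by
    filter_upwards [self_mem_nhdsWithin] with r (hr : 0 < r)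
    have hE' := hE r hr
    have hvr := hv r hr.le
    have hPr := hPpos r hr.le
    rw [div_eq_div_iff (by positivity) hr.ne']
    field_simp at hE' ⊢
    linear_combination -hE'
  have hGrT : Tendsto (fun r => g r / r) l
      (𝓝 (-(((n:ℝ) - 1) * (g 0 * g 0 * (m - 1) * (v 0 ^ m / (v 0) ^ 2))
        + α * v 0 + β * 0 * g 0 + ((n:ℝ) - 1) * (h 0 * (v 0 ^ m / v 0)))
        / (((n:ℝ) - 1) ^ 2 * (v 0 ^ m / v 0)))) := Tendsto.congr' hGreq hFT
  -- g 0 = 0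
  have hc0 : g 0 = 0 := by
    have h1 : Tendsto (fun r => g r / r * r) l
        (𝓝 ((-(((n:ℝ) - 1) * (g 0 * g 0 * (m - 1) * (v 0 ^ m / (v 0) ^ 2))
        + α * v 0 + β * 0 * g 0 + ((n:ℝ) - 1) * (h 0 * (v 0 ^ m / v 0)))
        / (((n:ℝ) - 1) ^ 2 * (v 0 ^ m / v 0))) * 0)) := hGrT.mul hrT
    have h2 : Tendsto g l (𝓝 0) := by
      rw [show (0:ℝ) = (-(((n:ℝ) - 1) * (g 0 * g 0 * (m - 1) * (v 0 ^ m / (v 0) ^ 2))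
        + α * v 0 + β * 0 * g 0 + ((n:ℝ) - 1) * (h 0 * (v 0 ^ m / v 0)))
        / (((n:ℝ) - 1) ^ 2 * (v 0 ^ m / v 0))) * 0 by ring]
      refine h1.congr' ?_
      filter_upwards [self_mem_nhdsWithin] with r (hr : 0 < r)
      field_simp
    exact tendsto_nhds_unique hgT h2
  have hslope' : Tendsto (fun r => g r / r) l (𝓝 (h 0)) := by
    refine hslope.congr ?_
    intro r; rw [hc0, sub_zero]
  have hB := tendsto_nhds_unique hslope' hGrT
  have hA' : h 0 = -α * (v 0) ^ 2 / (v 0 ^ m * ((n:ℝ) * ((n:ℝ) - 1))) := by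
    rw [eq_div_iff (by positivity)]
    rw [hc0] at hB
    field_simp at hB
    apply mul_right_cancel₀ hv0.ne'
    linear_combination hB
  -- derivative of R for r > 0
  have hdR : ∀ r : ℝ, 0 < r → deriv R r =
      2 * β * ((1 - m) / 2 * (((1 * g r + r * h r) * v r - r * g r * g r) / (v r) ^ 2)) := by
    intro r hr
    have heR : (fun s => ρ + 2 * β * (1 + (1 - m) / 2 * (s * g s / v s))) =ᶠ[𝓝 r] R := by
      filter_upwards [Ioi_mem_nhds hr] with s hs
      rw [hRdef s (le_of_lt hs), (hdv s hs).deriv]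
    rw [← heR.deriv_eq]
    have hq : HasDerivAt (fun s => s * g s / v s)
        (((1 * g r + r * h r) * v r - r * g r * g r) / (v r) ^ 2) r :=
      ((hasDerivAt_id' r).mul (hdg r hr)).div (hdv r hr) (hvne r hr.le)
    exact ((((hq.const_mul ((1 - m) / 2)).const_add 1).const_mul (2 * β)).const_add ρ).deriv
  -- K₀ coincides with an explicit expression
  have hΦeq : (fun r => -(1 - m) / 2 * (v r ^ m / v r) *
      (-((n:ℝ) - 2) * (g r / r) / v r - m * (g r) ^ 2 / (v r) ^ 2
        - (α * v r + β * r * g r) / (v r ^ m * ((n:ℝ) - 1)))) =ᶠ[l] K₀ := by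
    filter_upwards [self_mem_nhdsWithin] with r (hr : 0 < r)
    rw [hK₀ r hr, hdR r hr, e3 r hr]
    have hvr := hv r hr.le
    have hPr := hPpos r hr.le
    have hE' := hE r hr
    field_simp [hr.ne', hvr.ne', hPr.ne', hβ.ne', hn1.ne'] at hE' ⊢
    linear_combination hE'
  -- the limit of the explicit expression
  have hΦT : Tendsto (fun r => -(1 - m) / 2 * (v r ^ m / v r) *
      (-((n:ℝ) - 2) * (g r / r) / v r - m * (g r) ^ 2 / (v r) ^ 2
        - (α * v r + β * r * g r) / (v r ^ m * ((n:ℝ) - 1)))) l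
      (𝓝 (-(1 - m) / 2 * (v 0 ^ m / v 0) *
        (-((n:ℝ) - 2) * (h 0) / v 0 - m * (g 0) ^ 2 / (v 0) ^ 2
          - (α * v 0 + β * 0 * g 0) / (v 0 ^ m * ((n:ℝ) - 1))))) := by
    refine (tendsto_const_nhds.mul (hPT.div hvT hv0.ne')).mul ((Tendsto.sub ?_ ?_).sub ?_)
    · exact (tendsto_const_nhds.mul hslope').div hvT hv0.ne'
    · exact (tendsto_const_nhds.mul (hgT.pow 2)).div (hvT.pow 2) (pow_ne_zero _ hv0.ne')
    · exact ((tendsto_const_nhds.mul hvT).add ((tendsto_const_nhds.mul hrT).mul hgT)).div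
        (hPT.mul_const ((n:ℝ) - 1)) (by positivity)
  have hKT : Tendsto K₀ l
      (𝓝 (-(1 - m) / 2 * (v 0 ^ m / v 0) *
        (-((n:ℝ) - 2) * (h 0) / v 0 - m * (g 0) ^ 2 / (v 0) ^ 2
          - (α * v 0 + β * 0 * g 0) / (v 0 ^ m * ((n:ℝ) - 1))))) :=
    Tendsto.congr' hΦeq hΦT
  have hR0 : R 0 = ρ + 2 * β := by
    rw [hRdef 0 le_rfl]; norm_num
  have hρ' : ρ = α * (1 - m) - 2 * β := by
    rw [hα]; field_simp; ring
  have hLT : -(1 - m) / 2 * (v 0 ^ m / v 0) *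
        (-((n:ℝ) - 2) * (h 0) / v 0 - m * (g 0) ^ 2 / (v 0) ^ 2
          - (α * v 0 + β * 0 * g 0) / (v 0 ^ m * ((n:ℝ) - 1)))
      = R 0 * (R 0 - ρ) / (2 * β * n * ((n : ℝ) - 1)) := by
    rw [hA', hc0, hR0, hρ']
    field_simp
    ring
  constructor
  · rw [← hLT]; exact hKT
  · rw [hR0, hρ']
    field_simp
    ring
end
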